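/- arXiv:1112.2640 — 8 statements merged into one kernel-verified Lean document; each statement's English description precedes it below -/
import Mathlib

section
/- For a probabilistic model with scores on [0,1], the expected loss of the score-uniform threshold choice method under a uniform distribution of cost proportions equals the mean absolute error: L = π₀ s̄₀ + π₁(1 − s̄₁), where s̄_k = ∫₀¹ s f_k(s) ds. -/
open MeasureTheory Set

lemma key (f : ℝ → ℝ) (hf : IntervalIntegrable f volume 0 1) :
    (∫ t in (0:ℝ)..1, ∫ s in (0:ℝ)..t, f s) = ∫ s in (0:ℝ)..1, (1 - s) * f s := by
  set μ : Measure ℝ := volume.restrict (Ioc (0:ℝ) 1) with hμ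
  have hμuniv : μ Set.univ = 1 := by
    simp [hμ, Measure.restrict_apply, Real.volume_Ioc]
  have hfμ : Integrable f μ := by
    have := hf.1
    exact (intervalIntegrable_iff_integrableOn_Ioc_of_le (zero_le_one' ℝ)).mp hf
  -- rewrite to set integrals
  rw [intervalIntegral.integral_of_le (zero_le_one' ℝ),
      intervalIntegral.integral_of_le (zero_le_one' ℝ)]
  have hA : MeasurableSet {p : ℝ × ℝ | p.2 ∈ Ioc 0 p.1} := by
    have : {p : ℝ × ℝ | p.2 ∈ Ioc 0 p.1} =
        {p : ℝ × ℝ | (0:ℝ) < p.2} ∩ {p : ℝ × ℝ | p.2 ≤ p.1} := by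
      ext p; simp [Set.mem_Ioc, and_comm]
    rw [this]
    exact (measurableSet_lt measurable_const measurable_snd).inter
      (measurableSet_le measurable_snd measurable_fst)
  have hsnd : Integrable (fun p : ℝ × ℝ => f p.2) (μ.prod μ) := by
    have hmap : Measure.map Prod.snd (μ.prod μ) = μ := by
      rw [Measure.map_snd_prod, hμuniv, one_smul]
    have := (integrable_map_measure (by rw [hmap]; exact hfμ.aestronglyMeasurable)
      measurable_snd.aemeasurable).mp (by rw [hmap]; exact hfμ)
    exact this
  have hint : Integrable (fun p : ℝ × ℝ => ({p : ℝ × ℝ | p.2 ∈ Ioc 0 p.1}).indicator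
      (fun p : ℝ × ℝ => f p.2) p) (μ.prod μ) := hsnd.indicator hA
  have hswap := MeasureTheory.integral_integral_swap (μ := μ) (ν := μ)
      (f := fun t s => ({p : ℝ × ℝ | p.2 ∈ Ioc 0 p.1}).indicator
        (fun p : ℝ × ℝ => f p.2) (t, s)) (by exact hint)
  calc ∫ t in Ioc (0:ℝ) 1, ∫ s in (0:ℝ)..t, f s
      = ∫ t in Ioc (0:ℝ) 1, ∫ s in Ioc (0:ℝ) 1,
          ({p : ℝ × ℝ | p.2 ∈ Ioc 0 p.1}).indicator (fun p : ℝ × ℝ => f p.2) (t, s) := by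
        refine setIntegral_congr_fun measurableSet_Ioc (fun t ht => ?_)
        have h1 : ∫ s in (0:ℝ)..t, f s = ∫ s in Ioc (0:ℝ) t, f s :=
          intervalIntegral.integral_of_le ht.1.le
        have h2 : ∀ s : ℝ, ({p : ℝ × ℝ | p.2 ∈ Ioc 0 p.1}).indicator
            (fun p : ℝ × ℝ => f p.2) (t, s) = (Ioc (0:ℝ) t).indicator f s := by
          intro s
          simp only [Set.indicator_apply, Set.mem_setOf_eq]
        simp_rw [h2]
        rw [setIntegral_indicator measurableSet_Ioc,
          Set.inter_eq_self_of_subset_right (Ioc_subset_Ioc le_rfl ht.2), h1]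
    _ = ∫ s in Ioc (0:ℝ) 1, ∫ t in Ioc (0:ℝ) 1,
          ({p : ℝ × ℝ | p.2 ∈ Ioc 0 p.1}).indicator (fun p : ℝ × ℝ => f p.2) (t, s) := hswap
    _ = ∫ s in Ioc (0:ℝ) 1, (1 - s) * f s := by
        refine setIntegral_congr_fun measurableSet_Ioc (fun s hs => ?_)
        have h2 : ∀ t : ℝ, ({p : ℝ × ℝ | p.2 ∈ Ioc 0 p.1}).indicator
            (fun p : ℝ × ℝ => f p.2) (t, s) = (Ici s).indicator (fun _ => f s) t := by
          intro t
          simp only [Set.indicator_apply, Set.mem_setOf_eq, Set.mem_Ioc, Set.mem_Ici]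
          by_cases ht : s ≤ t
          · simp [ht, hs.1]
          · simp [ht]
        simp_rw [h2]
        rw [setIntegral_indicator measurableSet_Ici, setIntegral_const]
        have : Ioc (0:ℝ) 1 ∩ Ici s = Icc s 1 := by
          ext t; constructor
          · rintro ⟨⟨_, ht1⟩, hts⟩; exact ⟨hts, ht1⟩
          · rintro ⟨h1, h2⟩; exact ⟨⟨lt_of_lt_of_le hs.1 h1, h2⟩, h1⟩
        rw [this, measureReal_def, Real.volume_Icc, ENNReal.toReal_ofReal (by linarith [hs.2])]
        simp

/-- Score-uniform threshold choice: expected loss under uniform cost proportions equals MAE. -/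
theorem score_uniform_expected_loss_eq_MAE
    (π0 π1 : ℝ) (hπ0 : 0 ≤ π0) (hπ1 : 0 ≤ π1) (hπ : π0 + π1 = 1)
    (f0 f1 F0 F1 : ℝ → ℝ)
    (hf0 : ∀ s, 0 ≤ f0 s) (hf1 : ∀ s, 0 ≤ f1 s)
    (hf0int : IntervalIntegrable f0 volume 0 1)
    (hf1int : IntervalIntegrable f1 volume 0 1)
    (hf0norm : (∫ s in (0:ℝ)..1, f0 s) = 1)
    (hf1norm : (∫ s in (0:ℝ)..1, f1 s) = 1)
    (hF0 : ∀ t, F0 t = ∫ s in (0:ℝ)..t, f0 s)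
    (hF1 : ∀ t, F1 t = ∫ s in (0:ℝ)..t, f1 s) :
    (∫ c in (0:ℝ)..1, ∫ t in (0:ℝ)..1,
        2 * (c * π0 * (1 - F0 t) + (1 - c) * π1 * F1 t))
      = π0 * (∫ s in (0:ℝ)..1, s * f0 s) + π1 * (∫ s in (0:ℝ)..1, (1 - s) * f1 s) := by
  -- integrability of F0, F1
  have hF0cont : ContinuousOn F0 (Set.uIcc (0:ℝ) 1) := by
    have := intervalIntegral.continuousOn_primitive_interval' (μ := volume) hf0int
      (left_mem_uIcc (a := (0:ℝ)) (b := 1))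
    refine this.congr fun x _ => (hF0 x)
  have hF1cont : ContinuousOn F1 (Set.uIcc (0:ℝ) 1) := by
    have := intervalIntegral.continuousOn_primitive_interval' (μ := volume) hf1int
      (left_mem_uIcc (a := (0:ℝ)) (b := 1))
    refine this.congr fun x _ => (hF1 x)
  have hF0i : IntervalIntegrable F0 volume 0 1 := hF0cont.intervalIntegrable
  have hF1i : IntervalIntegrable F1 volume 0 1 := hF1cont.intervalIntegrable
  have hsf0 : IntervalIntegrable (fun s => s * f0 s) volume 0 1 :=
    hf0int.continuousOn_mul continuousOn_id
  set A : ℝ := 1 - ∫ t in (0:ℝ)..1, F0 t with hA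
  set B : ℝ := ∫ t in (0:ℝ)..1, F1 t with hB
  have hIF0 : (∫ t in (0:ℝ)..1, F0 t) = 1 - ∫ s in (0:ℝ)..1, s * f0 s := by
    have h1 : (∫ t in (0:ℝ)..1, F0 t) = ∫ t in (0:ℝ)..1, ∫ s in (0:ℝ)..t, f0 s := by
      exact intervalIntegral.integral_congr fun t _ => hF0 t
    rw [h1, key f0 hf0int]
    have h2 : (∫ s in (0:ℝ)..1, (1 - s) * f0 s)
        = (∫ s in (0:ℝ)..1, f0 s) - ∫ s in (0:ℝ)..1, s * f0 s := by
      rw [← intervalIntegral.integral_sub hf0int hsf0]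
      exact intervalIntegral.integral_congr fun s _ => by ring
    rw [h2, hf0norm]
  have hIF1 : B = ∫ s in (0:ℝ)..1, (1 - s) * f1 s := by
    have h1 : B = ∫ t in (0:ℝ)..1, ∫ s in (0:ℝ)..t, f1 s := by
      exact intervalIntegral.integral_congr fun t _ => hF1 t
    rw [h1, key f1 hf1int]
  have inner : ∀ c : ℝ, (∫ t in (0:ℝ)..1,
      2 * (c * π0 * (1 - F0 t) + (1 - c) * π1 * F1 t))
      = c * (2 * π0 * A - 2 * π1 * B) + 2 * π1 * B := by
    intro c
    have heq : (fun t => 2 * (c * π0 * (1 - F0 t) + (1 - c) * π1 * F1 t))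
        = fun t => (2 * c * π0) * (1 - F0 t) + (2 * (1 - c) * π1) * F1 t := by
      funext t; ring
    rw [heq, intervalIntegral.integral_add
        (((intervalIntegrable_const (c := (1:ℝ))).sub hF0i).const_mul _)
        (hF1i.const_mul _),
      intervalIntegral.integral_const_mul, intervalIntegral.integral_const_mul,
      intervalIntegral.integral_sub (intervalIntegrable_const (c := (1:ℝ))) hF0i,
      intervalIntegral.integral_const]
    simp only [smul_eq_mul, sub_zero, mul_one]
    rw [hA, hB]; ring
  rw [intervalIntegral.integral_congr (fun c _ => inner c)]
  rw [intervalIntegral.integral_add ((intervalIntegral.intervalIntegrable_id.mul_const _))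
      (intervalIntegrable_const),
    intervalIntegral.integral_mul_const, integral_id,
    intervalIntegral.integral_const]
  have hAv : A = ∫ s in (0:ℝ)..1, s * f0 s := by rw [hA, hIF0]; ring
  rw [hIF1] at *
  rw [hAv] at *
  simp only [smul_eq_mul]
  ring
end

section
/- For a probabilistic model with scores on [0,1], the expected loss of the score-driven threshold choice method (threshold T(c) = c) under a uniform distribution of cost proportions equals the Brier score: ∫₀¹ 2{c π₀ (1−F₀(c)) + (1−c) π₁ F₁(c)} dc = π₀ ∫₀¹ s² f₀(s) ds + π₁ ∫₀¹ (1−s)² f₁(s) ds. -/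
open MeasureTheory Set

/-- Fubini swap: ∫₀¹ w(c) ∫_c¹ g = ∫₀¹ (∫₀ˢ w) g(s). -/
lemma swap_lt_aux (w g : ℝ → ℝ) (hw : Continuous w)
    (hg : IntegrableOn g (Set.Ioc 0 1)) :
    (∫ c in Set.Ioc (0:ℝ) 1, w c * ∫ s in Set.Ioc c 1, g s)
      = ∫ s in Set.Ioc (0:ℝ) 1, (∫ c in Set.Ioc 0 s, w c) * g s := by
  set μ := volume.restrict (Set.Ioc (0:ℝ) 1) with hμ
  haveI : IsFiniteMeasure μ := by
    constructor
    rw [hμ, Measure.restrict_apply_univ, Real.volume_Ioc]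
    norm_num
  obtain ⟨C, hC⟩ : ∃ C, ∀ x ∈ Set.Icc (0:ℝ) 1, ‖w x‖ ≤ C :=
    isCompact_Icc.exists_bound_of_continuousOn hw.continuousOn
  have hC0 : 0 ≤ C := le_trans (norm_nonneg _) (hC 0 ⟨le_refl _, zero_le_one⟩)
  set F : ℝ × ℝ → ℝ := fun p => if p.1 < p.2 then w p.1 * g p.2 else 0 with hF
  have hgm : AEStronglyMeasurable g μ := hg.aestronglyMeasurable
  have hFsm : AEStronglyMeasurable F (μ.prod μ) := by
    have h1 : AEStronglyMeasurable (fun p : ℝ × ℝ => w p.1 * g p.2) (μ.prod μ) :=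
      ((hw.comp continuous_fst).aestronglyMeasurable).mul hgm.comp_snd
    have h2 : F = Set.indicator {p : ℝ × ℝ | p.1 < p.2} (fun p => w p.1 * g p.2) := by
      funext p
      by_cases h : p.1 < p.2 <;> simp [hF, Set.indicator, h]
    rw [h2]
    exact h1.indicator (measurableSet_lt measurable_fst measurable_snd)
  have hFint : Integrable F (μ.prod μ) := by
    refine Integrable.mono' ((integrable_const C).mul_prod hg.abs) hFsm ?_
    have hmem : ∀ᵐ p ∂(μ.prod μ), p ∈ (Set.Ioc (0:ℝ) 1) ×ˢ (Set.Ioc (0:ℝ) 1) := by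
      rw [hμ, Measure.prod_restrict]
      exact ae_restrict_mem (measurableSet_Ioc.prod measurableSet_Ioc)
    filter_upwards [hmem] with p hp
    have h1 : ‖w p.1‖ ≤ C := hC p.1 (Set.Ioc_subset_Icc_self hp.1)
    by_cases h : p.1 < p.2
    · simp only [hF, if_pos h]
      calc ‖w p.1 * g p.2‖ = ‖w p.1‖ * |g p.2| := by rw [norm_mul]; rfl
        _ ≤ C * |g p.2| := mul_le_mul_of_nonneg_right h1 (abs_nonneg _)
    · simp only [hF, if_neg h, norm_zero]
      positivity
  have hswap := integral_integral_swap (f := fun c s => F (c, s)) (μ := μ) (ν := μ) hFint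
  have hL : (∫ c, (∫ s, F (c, s) ∂μ) ∂μ)
      = ∫ c in Set.Ioc (0:ℝ) 1, w c * ∫ s in Set.Ioc c 1, g s := by
    refine setIntegral_congr_fun measurableSet_Ioc fun c hc => ?_
    have h1 : ∀ s, F (c, s) = (Set.Ioi c).indicator (fun s => w c * g s) s := by
      intro s
      by_cases h : c < s <;> simp [hF, Set.indicator, h, Set.mem_Ioi]
    calc (∫ s, F (c, s) ∂μ) = ∫ s, (Set.Ioi c).indicator (fun s => w c * g s) s ∂μ := by
          exact integral_congr_ae (Filter.Eventually.of_forall h1)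
      _ = ∫ s in Set.Ioi c, w c * g s ∂μ := integral_indicator measurableSet_Ioi
      _ = ∫ s in Set.Ioi c ∩ Set.Ioc 0 1, w c * g s := by
          rw [hμ, Measure.restrict_restrict measurableSet_Ioi]
      _ = ∫ s in Set.Ioc c 1, w c * g s := by
          apply setIntegral_congr_set
          apply Filter.EventuallyEq.of_eq
          ext x
          constructor
          · rintro ⟨h1, _, h3⟩; exact ⟨h1, h3⟩
          · rintro ⟨h1, h3⟩; exact ⟨h1, lt_trans hc.1 h1, h3⟩
      _ = w c * ∫ s in Set.Ioc c 1, g s := integral_const_mul _ _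
  have hR : (∫ s, (∫ c, F (c, s) ∂μ) ∂μ)
      = ∫ s in Set.Ioc (0:ℝ) 1, (∫ c in Set.Ioc 0 s, w c) * g s := by
    refine setIntegral_congr_fun measurableSet_Ioc fun s hs => ?_
    have h1 : ∀ c, F (c, s) = (Set.Iio s).indicator (fun c => w c * g s) c := by
      intro c
      by_cases h : c < s <;> simp [hF, Set.indicator, h, Set.mem_Iio]
    calc (∫ c, F (c, s) ∂μ) = ∫ c, (Set.Iio s).indicator (fun c => w c * g s) c ∂μ := by
          exact integral_congr_ae (Filter.Eventually.of_forall h1)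
      _ = ∫ c in Set.Iio s, w c * g s ∂μ := integral_indicator measurableSet_Iio
      _ = ∫ c in Set.Iio s ∩ Set.Ioc 0 1, w c * g s := by
          rw [hμ, Measure.restrict_restrict measurableSet_Iio]
      _ = ∫ c in Set.Ioo 0 s, w c * g s := by
          apply setIntegral_congr_set
          apply Filter.EventuallyEq.of_eq
          ext x
          constructor
          · rintro ⟨h1, h2, _⟩; exact ⟨h2, h1⟩
          · rintro ⟨h2, h1⟩; exact ⟨h1, h2, le_trans h1.le hs.2⟩
      _ = ∫ c in Set.Ioc 0 s, w c * g s := (integral_Ioc_eq_integral_Ioo).symm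
      _ = (∫ c in Set.Ioc 0 s, w c) * g s := integral_mul_const _ _
  rw [← hL, ← hR]
  exact hswap

/-- Fubini swap: ∫₀¹ w(c) ∫₀ᶜ g = ∫₀¹ (∫ₛ¹ w) g(s). -/
lemma swap_gt_aux (w g : ℝ → ℝ) (hw : Continuous w)
    (hg : IntegrableOn g (Set.Ioc 0 1)) :
    (∫ c in Set.Ioc (0:ℝ) 1, w c * ∫ s in Set.Ioc 0 c, g s)
      = ∫ s in Set.Ioc (0:ℝ) 1, (∫ c in Set.Ioc s 1, w c) * g s := by
  set μ := volume.restrict (Set.Ioc (0:ℝ) 1) with hμ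
  haveI : IsFiniteMeasure μ := by
    constructor
    rw [hμ, Measure.restrict_apply_univ, Real.volume_Ioc]
    norm_num
  obtain ⟨C, hC⟩ : ∃ C, ∀ x ∈ Set.Icc (0:ℝ) 1, ‖w x‖ ≤ C :=
    isCompact_Icc.exists_bound_of_continuousOn hw.continuousOn
  have hC0 : 0 ≤ C := le_trans (norm_nonneg _) (hC 0 ⟨le_refl _, zero_le_one⟩)
  set F : ℝ × ℝ → ℝ := fun p => if p.2 < p.1 then w p.1 * g p.2 else 0 with hF
  have hgm : AEStronglyMeasurable g μ := hg.aestronglyMeasurable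
  have hFsm : AEStronglyMeasurable F (μ.prod μ) := by
    have h1 : AEStronglyMeasurable (fun p : ℝ × ℝ => w p.1 * g p.2) (μ.prod μ) :=
      ((hw.comp continuous_fst).aestronglyMeasurable).mul hgm.comp_snd
    have h2 : F = Set.indicator {p : ℝ × ℝ | p.2 < p.1} (fun p => w p.1 * g p.2) := by
      funext p
      by_cases h : p.2 < p.1 <;> simp [hF, Set.indicator, h]
    rw [h2]
    exact h1.indicator (measurableSet_lt measurable_snd measurable_fst)
  have hFint : Integrable F (μ.prod μ) := by
    refine Integrable.mono' ((integrable_const C).mul_prod hg.abs) hFsm ?_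
    have hmem : ∀ᵐ p ∂(μ.prod μ), p ∈ (Set.Ioc (0:ℝ) 1) ×ˢ (Set.Ioc (0:ℝ) 1) := by
      rw [hμ, Measure.prod_restrict]
      exact ae_restrict_mem (measurableSet_Ioc.prod measurableSet_Ioc)
    filter_upwards [hmem] with p hp
    have h1 : ‖w p.1‖ ≤ C := hC p.1 (Set.Ioc_subset_Icc_self hp.1)
    by_cases h : p.2 < p.1
    · simp only [hF, if_pos h]
      calc ‖w p.1 * g p.2‖ = ‖w p.1‖ * |g p.2| := by rw [norm_mul]; rfl
        _ ≤ C * |g p.2| := mul_le_mul_of_nonneg_right h1 (abs_nonneg _)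
    · simp only [hF, if_neg h, norm_zero]
      positivity
  have hswap := integral_integral_swap (f := fun c s => F (c, s)) (μ := μ) (ν := μ) hFint
  have hL : (∫ c, (∫ s, F (c, s) ∂μ) ∂μ)
      = ∫ c in Set.Ioc (0:ℝ) 1, w c * ∫ s in Set.Ioc 0 c, g s := by
    refine setIntegral_congr_fun measurableSet_Ioc fun c hc => ?_
    have h1 : ∀ s, F (c, s) = (Set.Iio c).indicator (fun s => w c * g s) s := by
      intro s
      by_cases h : s < c <;> simp [hF, Set.indicator, h, Set.mem_Iio]
    calc (∫ s, F (c, s) ∂μ) = ∫ s, (Set.Iio c).indicator (fun s => w c * g s) s ∂μ := by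
          exact integral_congr_ae (Filter.Eventually.of_forall h1)
      _ = ∫ s in Set.Iio c, w c * g s ∂μ := integral_indicator measurableSet_Iio
      _ = ∫ s in Set.Iio c ∩ Set.Ioc 0 1, w c * g s := by
          rw [hμ, Measure.restrict_restrict measurableSet_Iio]
      _ = ∫ s in Set.Ioo 0 c, w c * g s := by
          apply setIntegral_congr_set
          apply Filter.EventuallyEq.of_eq
          ext x
          constructor
          · rintro ⟨h1, h2, _⟩; exact ⟨h2, h1⟩
          · rintro ⟨h2, h1⟩; exact ⟨h1, h2, le_trans h1.le hc.2⟩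
      _ = ∫ s in Set.Ioc 0 c, w c * g s := (integral_Ioc_eq_integral_Ioo).symm
      _ = w c * ∫ s in Set.Ioc 0 c, g s := integral_const_mul _ _
  have hR : (∫ s, (∫ c, F (c, s) ∂μ) ∂μ)
      = ∫ s in Set.Ioc (0:ℝ) 1, (∫ c in Set.Ioc s 1, w c) * g s := by
    refine setIntegral_congr_fun measurableSet_Ioc fun s hs => ?_
    have h1 : ∀ c, F (c, s) = (Set.Ioi s).indicator (fun c => w c * g s) c := by
      intro c
      by_cases h : s < c <;> simp [hF, Set.indicator, h, Set.mem_Ioi]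
    calc (∫ c, F (c, s) ∂μ) = ∫ c, (Set.Ioi s).indicator (fun c => w c * g s) c ∂μ := by
          exact integral_congr_ae (Filter.Eventually.of_forall h1)
      _ = ∫ c in Set.Ioi s, w c * g s ∂μ := integral_indicator measurableSet_Ioi
      _ = ∫ c in Set.Ioi s ∩ Set.Ioc 0 1, w c * g s := by
          rw [hμ, Measure.restrict_restrict measurableSet_Ioi]
      _ = ∫ c in Set.Ioc s 1, w c * g s := by
          apply setIntegral_congr_set
          apply Filter.EventuallyEq.of_eq
          ext x
          constructor
          · rintro ⟨h1, _, h3⟩; exact ⟨h1, h3⟩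
          · rintro ⟨h1, h3⟩; exact ⟨h1, lt_trans hs.1 h1, h3⟩
      _ = (∫ c in Set.Ioc s 1, w c) * g s := integral_mul_const _ _
  rw [← hL, ← hR]
  exact hswap

/-- Score-driven threshold choice: expected loss under uniform cost proportions equals
    the Brier score. -/
theorem score_driven_expected_loss_eq_brier
    (π0 π1 : ℝ) (hπ0 : 0 ≤ π0) (hπ1 : 0 ≤ π1) (hπ : π0 + π1 = 1)
    (f0 f1 F0 F1 : ℝ → ℝ)
    (hf0 : ∀ s, 0 ≤ f0 s) (hf1 : ∀ s, 0 ≤ f1 s)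
    (hF0 : ∀ t, F0 t = ∫ s in (0:ℝ)..t, f0 s)
    (hF1 : ∀ t, F1 t = ∫ s in (0:ℝ)..t, f1 s)
    (hf0int : IntervalIntegrable f0 volume 0 1)
    (hf1int : IntervalIntegrable f1 volume 0 1)
    (hF00 : F0 0 = 0) (hF10 : F1 0 = 0) (hF01 : F0 1 = 1) (hF11 : F1 1 = 1) :
    (∫ c in (0:ℝ)..1, 2 * (c * π0 * (1 - F0 c) + (1 - c) * π1 * F1 c))
      = π0 * (∫ s in (0:ℝ)..1, s ^ 2 * f0 s) + π1 * (∫ s in (0:ℝ)..1, (1 - s) ^ 2 * f1 s) := by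
  have huIcc : Set.uIcc (0:ℝ) 1 = Set.Icc 0 1 := Set.uIcc_of_le zero_le_one
  -- continuity of F0, F1 on [0,1]
  have hF0cont : ContinuousOn F0 (Set.uIcc (0:ℝ) 1) := by
    have h0 : F0 = fun x => ∫ t in (0:ℝ)..x, f0 t := funext hF0
    rw [h0]
    exact intervalIntegral.continuousOn_primitive_interval
      (by rw [huIcc, integrableOn_Icc_iff_integrableOn_Ioc]; exact hf0int.1)
  have hF1cont : ContinuousOn F1 (Set.uIcc (0:ℝ) 1) := by
    have h0 : F1 = fun x => ∫ t in (0:ℝ)..x, f1 t := funext hF1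
    rw [h0]
    exact intervalIntegral.continuousOn_primitive_interval
      (by rw [huIcc, integrableOn_Icc_iff_integrableOn_Ioc]; exact hf1int.1)
  have hA : IntervalIntegrable (fun c => 2 * (c * π0 * (1 - F0 c))) volume 0 1 :=
    (continuousOn_const.mul ((continuousOn_id.mul continuousOn_const).mul
      (continuousOn_const.sub hF0cont))).intervalIntegrable
  have hB : IntervalIntegrable (fun c => 2 * ((1 - c) * π1 * F1 c)) volume 0 1 :=
    (continuousOn_const.mul (((continuousOn_const.sub continuousOn_id).mul
      continuousOn_const).mul hF1cont)).intervalIntegrable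
  have hsplit : (∫ c in (0:ℝ)..1, 2 * (c * π0 * (1 - F0 c) + (1 - c) * π1 * F1 c))
      = (∫ c in (0:ℝ)..1, 2 * (c * π0 * (1 - F0 c)))
        + ∫ c in (0:ℝ)..1, 2 * ((1 - c) * π1 * F1 c) := by
    rw [← intervalIntegral.integral_add hA hB]
    congr 1
    funext c
    ring
  -- first term
  have hterm1 : (∫ c in (0:ℝ)..1, 2 * (c * π0 * (1 - F0 c)))
      = π0 * ∫ s in (0:ℝ)..1, s ^ 2 * f0 s := by
    rw [intervalIntegral.integral_of_le zero_le_one]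
    have step1 : (∫ c in Set.Ioc (0:ℝ) 1, 2 * (c * π0 * (1 - F0 c)))
        = ∫ c in Set.Ioc (0:ℝ) 1, π0 * ((2 * c) * ∫ s in Set.Ioc c 1, f0 s) := by
      refine setIntegral_congr_fun measurableSet_Ioc fun c hc => ?_
      have hint0c : IntervalIntegrable f0 volume 0 c :=
        hf0int.mono_set (by rw [Set.uIcc_of_le hc.1.le, huIcc]; exact Set.Icc_subset_Icc_right hc.2)
      have hintc1 : IntervalIntegrable f0 volume c 1 :=
        hf0int.mono_set (by rw [Set.uIcc_of_le hc.2, huIcc]; exact Set.Icc_subset_Icc_left hc.1.le)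
      have hsum : F0 c + ∫ s in c..1, f0 s = 1 := by
        rw [hF0 c, intervalIntegral.integral_add_adjacent_intervals hint0c hintc1, ← hF0 1, hF01]
      have h1 : 1 - F0 c = ∫ s in Set.Ioc c 1, f0 s := by
        rw [← intervalIntegral.integral_of_le hc.2]
        linarith
      rw [h1]
      ring
    rw [step1, integral_const_mul, swap_lt_aux (fun c => 2 * c) f0 (by continuity) hf0int.1]
    rw [intervalIntegral.integral_of_le zero_le_one]
    congr 1
    refine setIntegral_congr_fun measurableSet_Ioc fun s hs => ?_
    have hinner : (∫ c in Set.Ioc (0:ℝ) s, 2 * c) = s ^ 2 := by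
      rw [← intervalIntegral.integral_of_le hs.1.le, intervalIntegral.integral_const_mul,
        integral_id]
      ring
    rw [hinner]
  -- second term
  have hterm2 : (∫ c in (0:ℝ)..1, 2 * ((1 - c) * π1 * F1 c))
      = π1 * ∫ s in (0:ℝ)..1, (1 - s) ^ 2 * f1 s := by
    rw [intervalIntegral.integral_of_le zero_le_one]
    have step1 : (∫ c in Set.Ioc (0:ℝ) 1, 2 * ((1 - c) * π1 * F1 c))
        = ∫ c in Set.Ioc (0:ℝ) 1, π1 * ((2 * (1 - c)) * ∫ s in Set.Ioc 0 c, f1 s) := by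
      refine setIntegral_congr_fun measurableSet_Ioc fun c hc => ?_
      have h1 : F1 c = ∫ s in Set.Ioc 0 c, f1 s := by
        rw [hF1 c, intervalIntegral.integral_of_le hc.1.le]
      rw [h1]
      ring
    rw [step1, integral_const_mul,
      swap_gt_aux (fun c => 2 * (1 - c)) f1 (by continuity) hf1int.1]
    rw [intervalIntegral.integral_of_le zero_le_one]
    congr 1
    refine setIntegral_congr_fun measurableSet_Ioc fun s hs => ?_
    have hinner : (∫ c in Set.Ioc s 1, 2 * (1 - c)) = (1 - s) ^ 2 := by
      rw [← intervalIntegral.integral_of_le hs.2]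
      have h2 : ∀ c : ℝ, 2 * (1 - c) = 2 - 2 * c := fun c => by ring
      simp_rw [h2]
      rw [intervalIntegral.integral_sub intervalIntegrable_const
          (by apply Continuous.intervalIntegrable; continuity),
        intervalIntegral.integral_const, intervalIntegral.integral_const_mul,
        integral_id]
      simp only [smul_eq_mul]
      ring
    rw [hinner]
  rw [hsplit, hterm1, hterm2]
end

section
/- Under the rate-uniform threshold choice method, the expected loss for a uniform distribution over rates and uniform cost proportions equals π₀π₁(1 − 2·AUC) + 1/2. -/
open MeasureTheory Filter
open Set Topology

/-- Rate-uniform threshold choice: expected loss over uniform rates and uniform cost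
    proportions equals `π₀π₁(1 - 2 AUC) + 1/2`. -/
theorem rate_uniform_expected_loss
    (π0 π1 : ℝ) (hπ0 : 0 ≤ π0) (hπ1 : 0 ≤ π1) (hπ : π0 + π1 = 1)
    (f0 f1 F0 F1 : ℝ → ℝ)
    (hf0 : ∀ s, 0 ≤ f0 s) (hf1 : ∀ s, 0 ≤ f1 s)
    (hF0deriv : ∀ t, HasDerivAt F0 (f0 t) t)
    (hF1deriv : ∀ t, HasDerivAt F1 (f1 t) t)
    (hF0bot : Tendsto F0 atBot (nhds 0)) (hF0top : Tendsto F0 atTop (nhds 1))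
    (hF1bot : Tendsto F1 atBot (nhds 0)) (hF1top : Tendsto F1 atTop (nhds 1))
    (hf0int : Integrable f0) (hf1int : Integrable f1)
    (Rinv : ℝ → ℝ)
    (hRinv : ∀ r ∈ Set.Icc (0:ℝ) 1, π0 * F0 (Rinv r) + π1 * F1 (Rinv r) = r)
    (AUC : ℝ) (hAUC : AUC = ∫ s, F0 s * f1 s) :
    (∫ r in (0:ℝ)..1, ∫ c in (0:ℝ)..1,
        2 * (c * π0 * (1 - F0 (Rinv r)) + (1 - c) * π1 * F1 (Rinv r)))
      = π0 * π1 * (1 - 2 * AUC) + 1 / 2 := by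
  -- basic cdf facts
  have hF0diff : Differentiable ℝ F0 := fun t => (hF0deriv t).differentiableAt
  have hF1diff : Differentiable ℝ F1 := fun t => (hF1deriv t).differentiableAt
  have hF0mono : Monotone F0 :=
    monotone_of_deriv_nonneg hF0diff (fun t => by rw [(hF0deriv t).deriv]; exact hf0 t)
  have hF1mono : Monotone F1 :=
    monotone_of_deriv_nonneg hF1diff (fun t => by rw [(hF1deriv t).deriv]; exact hf1 t)
  have hF0nn : ∀ t, 0 ≤ F0 t := fun t => hF0mono.le_of_tendsto hF0bot t
  have hF0le : ∀ t, F0 t ≤ 1 := fun t => hF0mono.ge_of_tendsto hF0top t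
  have hF1nn : ∀ t, 0 ≤ F1 t := fun t => hF1mono.le_of_tendsto hF1bot t
  have hF1le : ∀ t, F1 t ≤ 1 := fun t => hF1mono.ge_of_tendsto hF1top t
  set R : ℝ → ℝ := fun t => π0 * F0 t + π1 * F1 t with hRdef
  have hRmem : ∀ t, R t ∈ Set.Icc (0:ℝ) 1 := by
    intro t
    have b0 := mul_le_mul_of_nonneg_left (hF0le t) hπ0
    have b1 := mul_le_mul_of_nonneg_left (hF1le t) hπ1
    have c0 := mul_nonneg hπ0 (hF0nn t)
    have c1 := mul_nonneg hπ1 (hF1nn t)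
    constructor <;> simp only [hRdef] <;> nlinarith
  have hF0monoM : ∀ s t : ℝ, s ≤ t → π0 * F0 s ≤ π0 * F0 t :=
    fun s t h => mul_le_mul_of_nonneg_left (hF0mono h) hπ0
  have hF1monoM : ∀ s t : ℝ, s ≤ t → π1 * F1 s ≤ π1 * F1 t :=
    fun s t h => mul_le_mul_of_nonneg_left (hF1mono h) hπ1
  -- key: components agree after Rinv ∘ R
  have hkey : ∀ t, π0 * F0 (Rinv (R t)) = π0 * F0 t ∧ π1 * F1 (Rinv (R t)) = π1 * F1 t := by
    intro t
    have h1 := hRinv (R t) (hRmem t)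
    have ht : π0 * F0 t + π1 * F1 t = R t := rfl
    rcases le_total t (Rinv (R t)) with h | h
    · have a0 := hF0monoM _ _ h
      have a1 := hF1monoM _ _ h
      constructor <;> linarith
    · have a0 := hF0monoM _ _ h
      have a1 := hF1monoM _ _ h
      constructor <;> linarith
  -- monotonicity of components of Rinv on [0,1]
  have hps : ∀ r ∈ Set.Icc (0:ℝ) 1, ∀ r' ∈ Set.Icc (0:ℝ) 1, r ≤ r' →
      π0 * F0 (Rinv r) ≤ π0 * F0 (Rinv r') ∧ π1 * F1 (Rinv r) ≤ π1 * F1 (Rinv r') := by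
    intro r hr r' hr' hle
    have h1 := hRinv r hr
    have h2 := hRinv r' hr'
    rcases le_total (Rinv r) (Rinv r') with h | h
    · exact ⟨hF0monoM _ _ h, hF1monoM _ _ h⟩
    · have a0 := hF0monoM _ _ h
      have a1 := hF1monoM _ _ h
      constructor <;> linarith
  set g : ℝ → ℝ := fun r => π0 * (1 - F0 (Rinv r)) + π1 * F1 (Rinv r) with hgdef
  have hgcont : ContinuousOn g (Set.Icc (0:ℝ) 1) := by
    have hlip : LipschitzOnWith 3 g (Set.Icc (0:ℝ) 1) := by
      rw [lipschitzOnWith_iff_dist_le_mul]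
      intro x hx y hy
      rw [Real.dist_eq, Real.dist_eq]
      have h1 := hRinv x hx
      have h2 := hRinv y hy
      rcases le_total x y with h | h
      · obtain ⟨a0, a1⟩ := hps x hx y hy h
        have hxy : |x - y| = y - x := by rw [abs_sub_comm, abs_of_nonneg (by linarith)]
        rw [hxy, abs_le]
        constructor <;> (simp only [hgdef]; push_cast; nlinarith)
      · obtain ⟨a0, a1⟩ := hps y hy x hx h
        have hxy : |x - y| = x - y := abs_of_nonneg (by linarith)
        rw [hxy, abs_le]
        constructor <;> (simp only [hgdef]; push_cast; nlinarith)
    exact hlip.continuousOn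
  have hgbound : ∀ r ∈ Set.Icc (0:ℝ) 1, ‖g r‖ ≤ 1 := by
    intro r hr
    have h1 := hRinv r hr
    have b0 := mul_le_mul_of_nonneg_left (hF0le (Rinv r)) hπ0
    have b1 := mul_le_mul_of_nonneg_left (hF1le (Rinv r)) hπ1
    have c0 := mul_nonneg hπ0 (hF0nn (Rinv r))
    have c1 := mul_nonneg hπ1 (hF1nn (Rinv r))
    rw [Real.norm_eq_abs, abs_le]
    constructor <;> (simp only [hgdef]; nlinarith)
  have hgR : ∀ x, g (R x) = π0 * (1 - F0 x) + π1 * F1 x := by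
    intro x
    obtain ⟨e0, e1⟩ := hkey x
    simp only [hgdef]
    linear_combination e1 - e0
  -- R derivative and continuity
  have hR' : ∀ x, HasDerivAt R (π0 * f0 x + π1 * f1 x) x :=
    fun x => ((hF0deriv x).const_mul π0).add ((hF1deriv x).const_mul π1)
  have hRcont : Continuous R :=
    (continuous_const.mul hF0diff.continuous).add (continuous_const.mul hF1diff.continuous)
  set P : ℝ → ℝ := fun x => (π0 * f0 x + π1 * f1 x) * (π0 * (1 - F0 x) + π1 * F1 x) with hPdef
  have hbdd1 : ∀ x, ‖π0 * (1 - F0 x) + π1 * F1 x‖ ≤ 1 := by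
    intro x
    have b0 := mul_le_mul_of_nonneg_left (hF0le x) hπ0
    have b1 := mul_le_mul_of_nonneg_left (hF1le x) hπ1
    have c0 := mul_nonneg hπ0 (hF0nn x)
    have c1 := mul_nonneg hπ1 (hF1nn x)
    rw [Real.norm_eq_abs, abs_le]
    constructor <;> nlinarith
  have hcontB : Continuous (fun x => π0 * (1 - F0 x) + π1 * F1 x) :=
    (continuous_const.mul (continuous_const.sub hF0diff.continuous)).add
      (continuous_const.mul hF1diff.continuous)
  have hR'int : Integrable (fun x => π0 * f0 x + π1 * f1 x) :=
    (hf0int.const_mul π0).add (hf1int.const_mul π1)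
  have hPint : Integrable P := by
    have h := hR'int.bdd_mul hcontB.aestronglyMeasurable (ae_of_all _ hbdd1)
    exact h.congr (ae_of_all _ fun x => by simp only [hPdef]; ring)
  -- the substituted integrand equals P
  have hfunP : (fun x => (π0 * f0 x + π1 * f1 x) • ((g ∘ R) x)) = P := by
    funext x
    simp only [Function.comp, smul_eq_mul, hPdef, hgR x]
  -- substitution
  have hsub : ∀ a b : ℝ, (∫ r in R a..R b, g r) = ∫ x in a..b, P x := by
    intro a b
    have himg : R '' (Set.uIcc a b) ⊆ Set.Icc (0:ℝ) 1 := by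
      rintro _ ⟨x, _, rfl⟩; exact hRmem x
    have himg2 : R '' (Set.Ioo (min a b) (max a b)) ⊆ Set.Icc (0:ℝ) 1 := by
      rintro _ ⟨x, _, rfl⟩; exact hRmem x
    have h1 := intervalIntegral.integral_comp_smul_deriv''' (a := a) (b := b)
      hRcont.continuousOn (fun x _ => (hR' x).hasDerivWithinAt)
      (hgcont.mono himg2)
      ((hgcont.mono himg).integrableOn_compact (isCompact_uIcc.image hRcont))
      (by rw [hfunP]; exact hPint.integrableOn)
    rw [hfunP] at h1
    exact h1.symm
  -- limits of R
  have hRbot : Tendsto R atBot (𝓝 0) := by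
    have := (hF0bot.const_mul π0).add (hF1bot.const_mul π1)
    simpa using this
  have hRtop : Tendsto R atTop (𝓝 1) := by
    have := (hF0top.const_mul π0).add (hF1top.const_mul π1)
    simpa [hπ] using this
  have hnegseq : Tendsto (fun n : ℕ => -(n:ℝ)) atTop atBot :=
    tendsto_neg_atBot_iff.mpr tendsto_natCast_atTop_atTop
  have hposseq : Tendsto (fun n : ℕ => (n:ℝ)) atTop atTop := tendsto_natCast_atTop_atTop
  have hRa : Tendsto (fun n : ℕ => R (-(n:ℝ))) atTop (𝓝 0) := hRbot.comp hnegseq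
  have hRb : Tendsto (fun n : ℕ => R ((n:ℝ))) atTop (𝓝 1) := hRtop.comp hposseq
  -- interval integrability of g inside [0,1]
  have hginti : ∀ u v : ℝ, u ∈ Set.Icc (0:ℝ) 1 → v ∈ Set.Icc (0:ℝ) 1 →
      IntervalIntegrable g volume u v := by
    intro u v hu hv
    apply ContinuousOn.intervalIntegrable
    apply hgcont.mono
    intro x hx
    rw [Set.mem_uIcc] at hx
    rcases hx with ⟨h1, h2⟩ | ⟨h1, h2⟩
    · exact ⟨le_trans hu.1 h1, le_trans h2 hv.2⟩
    · exact ⟨le_trans hv.1 h1, le_trans h2 hu.2⟩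
  -- decomposition
  have hdecomp : ∀ a b : ℝ, (∫ r in R a..R b, g r)
      = (∫ r in (0:ℝ)..1, g r) - (∫ r in (0:ℝ)..R a, g r) - (∫ r in R b..(1:ℝ), g r) := by
    intro a b
    have m0 : (0:ℝ) ∈ Set.Icc (0:ℝ) 1 := ⟨le_refl 0, zero_le_one⟩
    have m1 : (1:ℝ) ∈ Set.Icc (0:ℝ) 1 := ⟨zero_le_one, le_refl 1⟩
    have i1 := intervalIntegral.integral_add_adjacent_intervals
      (hginti 0 (R a) m0 (hRmem a)) (hginti (R a) (R b) (hRmem a) (hRmem b))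
    have i2 := intervalIntegral.integral_add_adjacent_intervals
      (hginti 0 (R b) m0 (hRmem b)) (hginti (R b) 1 (hRmem b) m1)
    linarith
  -- error bounds
  have hIoc : ∀ c ∈ Set.Icc (0:ℝ) 1, Set.uIoc (0:ℝ) c ⊆ Set.Icc (0:ℝ) 1 := by
    intro c hc
    rw [Set.uIoc_of_le hc.1]
    exact Set.Ioc_subset_Icc_self.trans (Set.Icc_subset_Icc_right hc.2)
  have hIoc' : ∀ c ∈ Set.Icc (0:ℝ) 1, Set.uIoc c (1:ℝ) ⊆ Set.Icc (0:ℝ) 1 := by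
    intro c hc
    rw [Set.uIoc_of_le hc.2]
    exact Set.Ioc_subset_Icc_self.trans (Set.Icc_subset_Icc_left hc.1)
  have he1 : Tendsto (fun n : ℕ => ∫ r in (0:ℝ)..R (-(n:ℝ)), g r) atTop (𝓝 0) := by
    apply squeeze_zero_norm (a := fun n : ℕ => 1 * |R (-(n:ℝ)) - 0|)
    · intro n
      exact intervalIntegral.norm_integral_le_of_norm_le_const
        (fun x hx => hgbound x (hIoc _ (hRmem _) hx))
    · have : Tendsto (fun n : ℕ => R (-(n:ℝ)) - 0) atTop (𝓝 (0 - 0)) := hRa.sub tendsto_const_nhds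
      simpa using this.abs
  have he2 : Tendsto (fun n : ℕ => ∫ r in R ((n:ℝ))..(1:ℝ), g r) atTop (𝓝 0) := by
    apply squeeze_zero_norm (a := fun n : ℕ => 1 * |1 - R ((n:ℝ))|)
    · intro n
      exact intervalIntegral.norm_integral_le_of_norm_le_const
        (fun x hx => hgbound x (hIoc' _ (hRmem _) hx))
    · have : Tendsto (fun n : ℕ => (1:ℝ) - R ((n:ℝ))) atTop (𝓝 (1 - 1)) :=
        tendsto_const_nhds.sub hRb
      simpa using this.abs
  have hglim : Tendsto (fun n : ℕ => ∫ r in R (-(n:ℝ))..R ((n:ℝ)), g r) atTop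
      (𝓝 (∫ r in (0:ℝ)..1, g r)) := by
    have h := (((tendsto_const_nhds :
        Tendsto (fun _ : ℕ => (∫ r in (0:ℝ)..1, g r)) atTop _)).sub he1).sub he2
    rw [sub_zero, sub_zero] at h
    exact h.congr (fun n => (hdecomp (-(n:ℝ)) ((n:ℝ))).symm)
  have hPlim : Tendsto (fun n : ℕ => ∫ r in R (-(n:ℝ))..R ((n:ℝ)), g r) atTop
      (𝓝 (∫ x, P x)) := by
    have h := intervalIntegral_tendsto_integral hPint hnegseq hposseq
    exact h.congr (fun n => (hsub (-(n:ℝ)) ((n:ℝ))).symm)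
  have hvalg : (∫ r in (0:ℝ)..1, g r) = ∫ x, P x := tendsto_nhds_unique hglim hPlim
  -- auxiliary integrable pieces
  have hb1F0 : ∀ x, ‖1 - F0 x‖ ≤ 1 := by
    intro x
    rw [Real.norm_eq_abs, abs_le]
    constructor
    · linarith [hF0le x]
    · linarith [hF0nn x]
  have hbF0 : ∀ x, ‖F0 x‖ ≤ 1 := by
    intro x
    rw [Real.norm_eq_abs, abs_le]
    exact ⟨by linarith [hF0nn x], hF0le x⟩
  have hbF1 : ∀ x, ‖F1 x‖ ≤ 1 := by
    intro x
    rw [Real.norm_eq_abs, abs_le]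
    exact ⟨by linarith [hF1nn x], hF1le x⟩
  have intA : Integrable (fun x => f0 x * (1 - F0 x)) := by
    have h := hf0int.bdd_mul (continuous_const.sub hF0diff.continuous).aestronglyMeasurable
      (ae_of_all _ hb1F0)
    exact h.congr (ae_of_all _ fun x => mul_comm _ _)
  have intC1 : Integrable (fun x => f0 x * F1 x) := by
    have h := hf0int.bdd_mul hF1diff.continuous.aestronglyMeasurable (ae_of_all _ hbF1)
    exact h.congr (ae_of_all _ fun x => mul_comm _ _)
  have intD : Integrable (fun x => F0 x * f1 x) :=
    hf1int.bdd_mul hF0diff.continuous.aestronglyMeasurable (ae_of_all _ hbF0)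
  have intC : Integrable (fun x => f0 x * F1 x + F0 x * f1 x) := intC1.add intD
  have intE : Integrable (fun x => F1 x * f1 x) :=
    hf1int.bdd_mul hF1diff.continuous.aestronglyMeasurable (ae_of_all _ hbF1)
  -- values of the pieces via FTC on ℝ
  have Ia : (∫ x, f0 x * (1 - F0 x)) = 1 / 2 := by
    have hW : ∀ x, HasDerivAt (fun y => F0 y - F0 y * F0 y / 2) (f0 x * (1 - F0 x)) x := by
      intro x
      have h := (hF0deriv x).sub (((hF0deriv x).mul (hF0deriv x)).div_const 2)
      exact h.congr_deriv (by ring)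
    have hbot : Tendsto (fun y => F0 y - F0 y * F0 y / 2) atBot (𝓝 0) := by
      have := hF0bot.sub ((hF0bot.mul hF0bot).div_const 2)
      simpa using this
    have htop : Tendsto (fun y => F0 y - F0 y * F0 y / 2) atTop (𝓝 (1/2)) := by
      have := hF0top.sub ((hF0top.mul hF0top).div_const 2)
      norm_num at this
      exact this
    have := integral_of_hasDerivAt_of_tendsto hW intA hbot htop
    simpa using this
  have Ib : (∫ x, f1 x) = 1 := by
    have := integral_of_hasDerivAt_of_tendsto hF1deriv hf1int hF1bot hF1top
    simpa using this
  have Ic : (∫ x, (f0 x * F1 x + F0 x * f1 x)) = 1 := by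
    have hW : ∀ x, HasDerivAt (fun y => F0 y * F1 y) (f0 x * F1 x + F0 x * f1 x) x :=
      fun x => (hF0deriv x).mul (hF1deriv x)
    have hbot : Tendsto (fun y => F0 y * F1 y) atBot (𝓝 0) := by
      have := hF0bot.mul hF1bot
      simpa using this
    have htop : Tendsto (fun y => F0 y * F1 y) atTop (𝓝 1) := by
      have := hF0top.mul hF1top
      simpa using this
    have := integral_of_hasDerivAt_of_tendsto hW intC hbot htop
    simpa using this
  have Ie : (∫ x, F1 x * f1 x) = 1 / 2 := by
    have hW : ∀ x, HasDerivAt (fun y => F1 y * F1 y / 2) (F1 x * f1 x) x := by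
      intro x
      have h := ((hF1deriv x).mul (hF1deriv x)).div_const 2
      exact h.congr_deriv (by ring)
    have hbot : Tendsto (fun y => F1 y * F1 y / 2) atBot (𝓝 0) := by
      have := (hF1bot.mul hF1bot).div_const 2
      simpa using this
    have htop : Tendsto (fun y => F1 y * F1 y / 2) atTop (𝓝 (1/2)) := by
      have := (hF1top.mul hF1top).div_const 2
      norm_num at this
      exact this
    have := integral_of_hasDerivAt_of_tendsto hW intE hbot htop
    simpa using this
  -- value of ∫ P
  have hPval : (∫ x, P x) = π0 * π1 * (1 - 2 * AUC) + 1 / 2 := by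
    have hPsplit : P = fun x => (π0^2 * (f0 x * (1 - F0 x)) + π0*π1 * f1 x
        + π0*π1 * (f0 x * F1 x + F0 x * f1 x) - 2*π0*π1 * (F0 x * f1 x))
        + π1^2 * (F1 x * f1 x) := by
      funext x
      simp only [hPdef]
      ring
    have J1 : Integrable (fun x => π0^2 * (f0 x * (1 - F0 x))) := intA.const_mul _
    have J2 : Integrable (fun x => π0*π1 * f1 x) := hf1int.const_mul _
    have J3 : Integrable (fun x => π0*π1 * (f0 x * F1 x + F0 x * f1 x)) := intC.const_mul _
    have J4 : Integrable (fun x => 2*π0*π1 * (F0 x * f1 x)) := intD.const_mul _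
    have J5 : Integrable (fun x => π1^2 * (F1 x * f1 x)) := intE.const_mul _
    have J12 : Integrable (fun x => π0^2 * (f0 x * (1 - F0 x)) + π0*π1 * f1 x) := J1.add J2
    have J123 : Integrable (fun x => π0^2 * (f0 x * (1 - F0 x)) + π0*π1 * f1 x
        + π0*π1 * (f0 x * F1 x + F0 x * f1 x)) := J12.add J3
    have J1234 : Integrable (fun x => π0^2 * (f0 x * (1 - F0 x)) + π0*π1 * f1 x
        + π0*π1 * (f0 x * F1 x + F0 x * f1 x) - 2*π0*π1 * (F0 x * f1 x)) := J123.sub J4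
    rw [hPsplit]
    beta_reduce
    rw [integral_add J1234 J5, integral_sub J123 J4, integral_add J12 J3, integral_add J1 J2]
    rw [integral_const_mul, integral_const_mul, integral_const_mul, integral_const_mul,
      integral_const_mul]
    rw [Ia, Ib, Ic, Ie, ← hAUC]
    linear_combination ((π0 + π1 + 1) / 2) * hπ
  -- inner integral in c
  have hinner : ∀ r : ℝ, (∫ c in (0:ℝ)..1,
      2 * (c * π0 * (1 - F0 (Rinv r)) + (1 - c) * π1 * F1 (Rinv r))) = g r := by
    intro r
    have hfun : (fun c : ℝ => 2 * (c * π0 * (1 - F0 (Rinv r)) + (1 - c) * π1 * F1 (Rinv r)))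
        = fun c : ℝ => c * (2 * (π0 * (1 - F0 (Rinv r))) - 2 * (π1 * F1 (Rinv r)))
          + 2 * (π1 * F1 (Rinv r)) := by
      funext c
      ring
    rw [hfun]
    rw [intervalIntegral.integral_add ((continuous_id'.mul continuous_const).intervalIntegrable (u := fun c : ℝ => c * _) 0 1)
      (continuous_const.intervalIntegrable 0 1)]
    rw [intervalIntegral.integral_mul_const, intervalIntegral.integral_const,
      integral_id]
    simp only [hgdef, smul_eq_mul]
    ring
  calc (∫ r in (0:ℝ)..1, ∫ c in (0:ℝ)..1,
        2 * (c * π0 * (1 - F0 (Rinv r)) + (1 - c) * π1 * F1 (Rinv r)))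
      = ∫ r in (0:ℝ)..1, g r := intervalIntegral.integral_congr (fun r _ => hinner r)
    _ = ∫ x, P x := hvalg
    _ = π0 * π1 * (1 - 2 * AUC) + 1 / 2 := hPval
end

section
/- Under the rate-driven threshold choice method, which sets the threshold T(c) = R⁻¹(c), the expected loss for uniform cost proportions equals π₀π₁(1 − 2·AUC) + 1/3. -/
open MeasureTheory Filter

set_option maxHeartbeats 1000000 in
/-- Rate-driven threshold choice: expected loss over uniform cost proportions equals
    `π₀π₁(1 - 2 AUC) + 1/3`. -/
theorem rate_driven_expected_loss
    (π0 π1 : ℝ) (hπ0 : 0 ≤ π0) (hπ1 : 0 ≤ π1) (hπ : π0 + π1 = 1)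
    (f0 f1 F0 F1 : ℝ → ℝ)
    (hf0 : ∀ s, 0 ≤ f0 s) (hf1 : ∀ s, 0 ≤ f1 s)
    (hF0deriv : ∀ t, HasDerivAt F0 (f0 t) t)
    (hF1deriv : ∀ t, HasDerivAt F1 (f1 t) t)
    (hF0bot : Tendsto F0 atBot (nhds 0)) (hF0top : Tendsto F0 atTop (nhds 1))
    (hF1bot : Tendsto F1 atBot (nhds 0)) (hF1top : Tendsto F1 atTop (nhds 1))
    (hf0int : Integrable f0) (hf1int : Integrable f1)
    (Rinv : ℝ → ℝ)
    (hRinv : ∀ c ∈ Set.Icc (0:ℝ) 1, π0 * F0 (Rinv c) + π1 * F1 (Rinv c) = c)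
    (AUC : ℝ) (hAUC : AUC = ∫ s, F0 s * f1 s) :
    (∫ c in (0:ℝ)..1,
        2 * (c * π0 * (1 - F0 (Rinv c)) + (1 - c) * π1 * F1 (Rinv c)))
      = π0 * π1 * (1 - 2 * AUC) + 1 / 3 := by
  -- basic facts about F0, F1
  have hF0mono : Monotone F0 :=
    monotone_of_deriv_nonneg (fun t => (hF0deriv t).differentiableAt)
      (fun t => by rw [(hF0deriv t).deriv]; exact hf0 t)
  have hF1mono : Monotone F1 :=
    monotone_of_deriv_nonneg (fun t => (hF1deriv t).differentiableAt)
      (fun t => by rw [(hF1deriv t).deriv]; exact hf1 t)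
  have hF0nn : ∀ t, 0 ≤ F0 t := fun t =>
    le_of_tendsto hF0bot (eventually_atBot.2 ⟨t, fun s hs => hF0mono hs⟩)
  have hF1nn : ∀ t, 0 ≤ F1 t := fun t =>
    le_of_tendsto hF1bot (eventually_atBot.2 ⟨t, fun s hs => hF1mono hs⟩)
  have hF0le : ∀ t, F0 t ≤ 1 := fun t =>
    ge_of_tendsto hF0top (eventually_atTop.2 ⟨t, fun s hs => hF0mono hs⟩)
  have hF1le : ∀ t, F1 t ≤ 1 := fun t =>
    ge_of_tendsto hF1top (eventually_atTop.2 ⟨t, fun s hs => hF1mono hs⟩)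
  have hF0cont : Continuous F0 :=
    continuous_iff_continuousAt.2 fun t => (hF0deriv t).continuousAt
  have hF1cont : Continuous F1 :=
    continuous_iff_continuousAt.2 fun t => (hF1deriv t).continuousAt
  -- the rate function R and its properties
  have hR01 : ∀ t, π0 * F0 t + π1 * F1 t ∈ Set.Icc (0:ℝ) 1 := by
    intro t
    constructor
    · have := mul_nonneg hπ0 (hF0nn t); have := mul_nonneg hπ1 (hF1nn t); linarith
    · have h0 : π0 * F0 t ≤ π0 * 1 := mul_le_mul_of_nonneg_left (hF0le t) hπ0
      have h1 : π1 * F1 t ≤ π1 * 1 := mul_le_mul_of_nonneg_left (hF1le t) hπ1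
      nlinarith
  -- if R takes the same value at two points, so does π1 * F1
  have hflat : ∀ t t', π0 * F0 t + π1 * F1 t = π0 * F0 t' + π1 * F1 t' →
      π1 * F1 t = π1 * F1 t' := by
    have key : ∀ t t', t ≤ t' → π0 * F0 t + π1 * F1 t = π0 * F0 t' + π1 * F1 t' →
        π1 * F1 t = π1 * F1 t' := by
      intro t t' htt hRe
      have h0 : π0 * F0 t ≤ π0 * F0 t' := mul_le_mul_of_nonneg_left (hF0mono htt) hπ0
      have h1 : π1 * F1 t ≤ π1 * F1 t' := mul_le_mul_of_nonneg_left (hF1mono htt) hπ1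
      linarith
    intro t t' h
    rcases le_total t t' with h' | h'
    · exact key _ _ h' h
    · exact (key _ _ h' h.symm).symm
  -- key claim: π1 * F1 (Rinv (R t)) = π1 * F1 t
  have keyclaim : ∀ t, π1 * F1 (Rinv (π0 * F0 t + π1 * F1 t)) = π1 * F1 t := by
    intro t
    exact hflat _ _ (hRinv _ (hR01 t))
  -- endpoint values
  have hg0 : π1 * F1 (Rinv 0) = 0 := by
    have h := hRinv 0 (by constructor <;> norm_num)
    have h0 : 0 ≤ π0 * F0 (Rinv 0) := mul_nonneg hπ0 (hF0nn _)
    have h1 : 0 ≤ π1 * F1 (Rinv 0) := mul_nonneg hπ1 (hF1nn _)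
    linarith
  have hg1 : π1 * F1 (Rinv 1) = π1 := by
    have h := hRinv 1 (by constructor <;> norm_num)
    have h0 : π0 * F0 (Rinv 1) ≤ π0 * 1 := mul_le_mul_of_nonneg_left (hF0le _) hπ0
    have h1 : π1 * F1 (Rinv 1) ≤ π1 * 1 := mul_le_mul_of_nonneg_left (hF1le _) hπ1
    nlinarith
  -- the monotone extension ghat of c ↦ π1 F1 (Rinv c)
  set ghat : ℝ → ℝ :=
    fun c => π1 * F1 (Rinv (max 0 (min 1 c))) + max (c - 1) 0 + min c 0 with hghat
  have hproj : ∀ c ∈ Set.Icc (0:ℝ) 1, max 0 (min 1 c) = c := by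
    intro c hc
    rw [min_eq_right hc.2, max_eq_right hc.1]
  have hghat_eq : ∀ c ∈ Set.Icc (0:ℝ) 1, ghat c = π1 * F1 (Rinv c) := by
    intro c hc
    have h1 : max (c - 1) 0 = 0 := max_eq_right (by linarith [hc.2])
    have h2 : min c 0 = 0 := min_eq_right hc.1
    rw [hghat]; simp only [hproj c hc, h1, h2, add_zero]
  -- monotonicity of c ↦ π1 F1 (Rinv c) on [0,1]
  have hgmono : ∀ c ∈ Set.Icc (0:ℝ) 1, ∀ c' ∈ Set.Icc (0:ℝ) 1, c ≤ c' →
      π1 * F1 (Rinv c) ≤ π1 * F1 (Rinv c') := by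
    intro c hc c' hc' hcc
    rcases le_total (Rinv c) (Rinv c') with h | h
    · exact mul_le_mul_of_nonneg_left (hF1mono h) hπ1
    · have h0 : π0 * F0 (Rinv c') ≤ π0 * F0 (Rinv c) :=
        mul_le_mul_of_nonneg_left (hF0mono h) hπ0
      have h1 : π1 * F1 (Rinv c') ≤ π1 * F1 (Rinv c) :=
        mul_le_mul_of_nonneg_left (hF1mono h) hπ1
      have := hRinv c hc
      have := hRinv c' hc'
      linarith
  have hprojmem : ∀ c : ℝ, max 0 (min 1 c) ∈ Set.Icc (0:ℝ) 1 := by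
    intro c
    constructor
    · exact le_max_left _ _
    · exact max_le zero_le_one (min_le_left _ _)
  have hghatMono : Monotone ghat := by
    intro a b hab
    have hpa := hprojmem a
    have hpb := hprojmem b
    have hp : max 0 (min 1 a) ≤ max 0 (min 1 b) :=
      max_le_max le_rfl (min_le_min le_rfl hab)
    have h1 : π1 * F1 (Rinv (max 0 (min 1 a))) ≤ π1 * F1 (Rinv (max 0 (min 1 b))) :=
      hgmono _ hpa _ hpb hp
    have h2 : max (a - 1) 0 ≤ max (b - 1) 0 := max_le_max (by linarith) le_rfl
    have h3 : min a 0 ≤ min b 0 := min_le_min hab le_rfl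
    rw [hghat]
    dsimp only
    linarith
  -- surjectivity of ghat
  have hghatSurj : Function.Surjective ghat := by
    intro y
    rcases lt_trichotomy y 0 with hy | hy | hy
    · refine ⟨y, ?_⟩
      have h1 : max 0 (min 1 y) = 0 := by
        rw [min_eq_right (by linarith), max_eq_left (by linarith)]
      have h2 : max (y - 1) 0 = 0 := max_eq_right (by linarith)
      have h3 : min y 0 = y := min_eq_left (by linarith)
      rw [hghat]; dsimp only; rw [h1, h2, h3, hg0]; ring
    · refine ⟨0, ?_⟩
      have h1 : max (0:ℝ) (min 1 0) = 0 := by norm_num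
      have h2 : max ((0:ℝ) - 1) 0 = 0 := by norm_num
      have h3 : min (0:ℝ) 0 = 0 := by norm_num
      rw [hghat]; dsimp only; rw [h1, h2, h3, hg0, hy]; ring
    · rcases le_or_gt y π1 with hy1 | hy1
      · rcases eq_or_lt_of_le hy1 with hy2 | hy2
        · refine ⟨1, ?_⟩
          rw [hghat]; dsimp only
          rw [hproj 1 (by constructor <;> norm_num)]
          simp [hg1, hy2]
        · -- 0 < y < π1 : use the intermediate value theorem for F1
          have hπ1pos : 0 < π1 := lt_trans hy hy2
          have hy01 : y / π1 ∈ Set.Ioo (0:ℝ) 1 :=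
            ⟨div_pos hy hπ1pos, (div_lt_one hπ1pos).2 hy2⟩
          obtain ⟨a, ha⟩ := (hF1bot.eventually (gt_mem_nhds hy01.1)).exists
          obtain ⟨b, hb⟩ := (hF1top.eventually (lt_mem_nhds hy01.2)).exists
          have hab : a ≤ b := by
            by_contra hba
            push_neg at hba
            exact absurd (hF1mono hba.le) (by linarith)
          obtain ⟨t, _, ht⟩ := intermediate_value_Icc hab hF1cont.continuousOn
            (Set.mem_Icc.2 ⟨ha.le, hb.le⟩)
          refine ⟨π0 * F0 t + π1 * F1 t, ?_⟩
          rw [hghat_eq _ (hR01 t), keyclaim t, ht]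
          field_simp
      · refine ⟨y - π1 + 1, ?_⟩
        have hc1 : (1:ℝ) ≤ y - π1 + 1 := by linarith
        have h1 : max 0 (min 1 (y - π1 + 1)) = 1 := by
          rw [min_eq_left hc1, max_eq_right zero_le_one]
        have h2 : max (y - π1 + 1 - 1) 0 = y - π1 := by
          rw [max_eq_left (by linarith)]; ring
        have h3 : min (y - π1 + 1) 0 = 0 := min_eq_right (by linarith)
        rw [hghat]; dsimp only; rw [h1, h2, h3, hg1]; ring
  have hghatCont : Continuous ghat := hghatMono.continuous_of_surjective hghatSurj
  -- the primitive of ghat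
  set G : ℝ → ℝ := fun u => ∫ c in (0:ℝ)..u, ghat c with hG
  have hGderiv : ∀ u, HasDerivAt G (ghat u) u := fun u =>
    (hghatCont.integral_hasStrictDerivAt 0 u).hasDerivAt
  have hGcont : Continuous G :=
    continuous_iff_continuousAt.2 fun u => (hGderiv u).continuousAt
  -- derivative of R
  have hr : ∀ t, HasDerivAt (fun t => π0 * F0 t + π1 * F1 t)
      (π0 * f0 t + π1 * f1 t) t := fun t =>
    ((hF0deriv t).const_mul π0).add ((hF1deriv t).const_mul π1)
  -- derivative of G ∘ R
  have hΦ : ∀ t, HasDerivAt (fun t => G (π0 * F0 t + π1 * F1 t))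
      (π1 * F1 t * (π0 * f0 t + π1 * f1 t)) t := by
    intro t
    have h := (hGderiv (π0 * F0 t + π1 * F1 t)).comp t (hr t)
    have he : ghat (π0 * F0 t + π1 * F1 t) = π1 * F1 t := by
      rw [hghat_eq _ (hR01 t), keyclaim t]
    rwa [he] at h
  -- limits of G ∘ R
  have hRbot : Tendsto (fun t => π0 * F0 t + π1 * F1 t) atBot (nhds 0) := by
    have := (hF0bot.const_mul π0).add (hF1bot.const_mul π1)
    simpa using this
  have hRtop : Tendsto (fun t => π0 * F0 t + π1 * F1 t) atTop (nhds 1) := by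
    have := (hF0top.const_mul π0).add (hF1top.const_mul π1)
    simpa [mul_one, hπ] using this
  have hΦbot : Tendsto (fun t => G (π0 * F0 t + π1 * F1 t)) atBot (nhds (G 0)) :=
    (hGcont.tendsto 0).comp hRbot
  have hΦtop : Tendsto (fun t => G (π0 * F0 t + π1 * F1 t)) atTop (nhds (G 1)) :=
    (hGcont.tendsto 1).comp hRtop
  -- integrability facts
  have hrint : Integrable (fun t => π0 * f0 t + π1 * f1 t) :=
    (hf0int.const_mul π0).add (hf1int.const_mul π1)
  have hbigint : Integrable (fun t => π1 * F1 t * (π0 * f0 t + π1 * f1 t)) := by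
    refine Integrable.mono' (hrint.const_mul π1)
      (((hF1cont.const_smul π1).aestronglyMeasurable.mul hrint.aestronglyMeasurable))
      (ae_of_all _ fun t => ?_)
    have hrnn : 0 ≤ π0 * f0 t + π1 * f1 t := by
      have := mul_nonneg hπ0 (hf0 t); have := mul_nonneg hπ1 (hf1 t); linarith
    have h1 : 0 ≤ π1 * F1 t := mul_nonneg hπ1 (hF1nn t)
    have h2 : π1 * F1 t ≤ π1 := by
      have := mul_le_mul_of_nonneg_left (hF1le t) hπ1; linarith
    rw [Real.norm_eq_abs, abs_of_nonneg (mul_nonneg h1 hrnn)]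
    exact mul_le_mul_of_nonneg_right h2 hrnn
  have hF1f0int : Integrable (fun t => F1 t * f0 t) := by
    refine Integrable.mono' hf0int
      (hF1cont.aestronglyMeasurable.mul hf0int.aestronglyMeasurable)
      (ae_of_all _ fun t => ?_)
    rw [Real.norm_eq_abs, abs_of_nonneg (mul_nonneg (hF1nn t) (hf0 t))]
    nlinarith [hF1le t, hf0 t, hF1nn t]
  have hF0f1int : Integrable (fun t => F0 t * f1 t) := by
    refine Integrable.mono' hf1int
      (hF0cont.aestronglyMeasurable.mul hf1int.aestronglyMeasurable)
      (ae_of_all _ fun t => ?_)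
    rw [Real.norm_eq_abs, abs_of_nonneg (mul_nonneg (hF0nn t) (hf1 t))]
    nlinarith [hF0le t, hf1 t, hF0nn t]
  have hF1f1int : Integrable (fun t => F1 t * f1 t) := by
    refine Integrable.mono' hf1int
      (hF1cont.aestronglyMeasurable.mul hf1int.aestronglyMeasurable)
      (ae_of_all _ fun t => ?_)
    rw [Real.norm_eq_abs, abs_of_nonneg (mul_nonneg (hF1nn t) (hf1 t))]
    nlinarith [hF1le t, hf1 t, hF1nn t]
  -- main substitution identity
  have hmain : ∫ t, π1 * F1 t * (π0 * f0 t + π1 * f1 t) = G 1 - G 0 :=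
    integral_of_hasDerivAt_of_tendsto hΦ hbigint hΦbot hΦtop
  have hG0 : G 0 = 0 := by rw [hG]; exact intervalIntegral.integral_same
  -- ∫ F1 f1 = 1/2
  have hI2 : ∫ t, F1 t * f1 t = 1 / 2 := by
    have hd : ∀ t, HasDerivAt (fun t => F1 t * F1 t / 2) (F1 t * f1 t) t := by
      intro t
      have h := ((hF1deriv t).mul (hF1deriv t)).div_const 2
      exact h.congr_deriv (by ring)
    have hb : Tendsto (fun t => F1 t * F1 t / 2) atBot (nhds 0) := by
      have := (hF1bot.mul hF1bot).div_const 2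
      simpa using this
    have ht : Tendsto (fun t => F1 t * F1 t / 2) atTop (nhds (1 / 2)) := by
      have := (hF1top.mul hF1top).div_const 2
      simpa using this
    have := integral_of_hasDerivAt_of_tendsto hd hF1f1int hb ht
    rw [this]; ring
  -- ∫ (F1 f0 + F0 f1) = 1
  have hI3 : (∫ t, F1 t * f0 t) = 1 - AUC := by
    have hd : ∀ t, HasDerivAt (fun t => F0 t * F1 t) (F1 t * f0 t + F0 t * f1 t) t := by
      intro t
      have h := (hF0deriv t).mul (hF1deriv t)
      exact h.congr_deriv (by ring)
    have hb : Tendsto (fun t => F0 t * F1 t) atBot (nhds 0) := by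
      have := hF0bot.mul hF1bot
      simpa using this
    have ht : Tendsto (fun t => F0 t * F1 t) atTop (nhds 1) := by
      have := hF0top.mul hF1top
      simpa using this
    have hsum := integral_of_hasDerivAt_of_tendsto hd (hF1f0int.add hF0f1int) hb ht
    rw [integral_add hF1f0int hF0f1int] at hsum
    rw [hAUC]
    linarith
  -- value of G 1
  have hG1 : G 1 = π0 * π1 * (1 - AUC) + π1 * π1 * (1 / 2) := by
    have hsplit : (∫ t, π1 * F1 t * (π0 * f0 t + π1 * f1 t))
        = π0 * π1 * (∫ t, F1 t * f0 t) + π1 * π1 * (∫ t, F1 t * f1 t) := by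
      rw [← integral_const_mul, ← integral_const_mul,
        ← integral_add ((hF1f0int.const_mul _)) ((hF1f1int.const_mul _))]
      congr 1
      funext t
      ring
    rw [hsplit, hI2, hI3] at hmain
    linarith [hG0, hmain]
  -- rewrite the integrand on [0,1]
  have hcongr : (∫ c in (0:ℝ)..1,
      2 * (c * π0 * (1 - F0 (Rinv c)) + (1 - c) * π1 * F1 (Rinv c)))
      = ∫ c in (0:ℝ)..1, (2 * π0 * c - 2 * c ^ 2 + 2 * ghat c) := by
    refine intervalIntegral.integral_congr ?_
    intro c hc
    rw [Set.uIcc_of_le zero_le_one] at hc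
    have h := hRinv c hc
    show 2 * (c * π0 * (1 - F0 (Rinv c)) + (1 - c) * π1 * F1 (Rinv c))
      = 2 * π0 * c - 2 * c ^ 2 + 2 * ghat c
    rw [hghat_eq c hc]
    linear_combination (-2 * c) * h
  rw [hcongr]
  have hcontpoly1 : Continuous (fun c : ℝ => 2 * π0 * c) :=
    continuous_const.mul continuous_id
  have hcontpoly2 : Continuous (fun c : ℝ => 2 * c ^ 2) :=
    continuous_const.mul (continuous_pow 2)
  have hpoly : IntervalIntegrable (fun c : ℝ => 2 * π0 * c - 2 * c ^ 2) volume 0 1 :=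
    (hcontpoly1.sub hcontpoly2).intervalIntegrable 0 1
  have hgii : IntervalIntegrable (fun c : ℝ => 2 * ghat c) volume 0 1 :=
    ((continuous_const.mul hghatCont).intervalIntegrable 0 1 : _)
  rw [intervalIntegral.integral_add hpoly hgii]
  have h1 : (∫ c in (0:ℝ)..1, (2 * π0 * c - 2 * c ^ 2)) = π0 - 2 / 3 := by
    rw [intervalIntegral.integral_sub (hcontpoly1.intervalIntegrable 0 1)
      (hcontpoly2.intervalIntegrable 0 1)]
    rw [intervalIntegral.integral_const_mul, intervalIntegral.integral_const_mul,
      integral_id, integral_pow]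
    norm_num
    ring
  have h2 : (∫ c in (0:ℝ)..1, 2 * ghat c) = 2 * G 1 := by
    rw [intervalIntegral.integral_const_mul]
  rw [h1, h2, hG1]
  linear_combination (1 + π1) * hπ
end

section
/- If a model is perfectly calibrated then π₀ s̄₀ = π₁ (1 − s̄₁), i.e. π₀·MAE₀ = π₁·MAE₁. -/
open MeasureTheory

/-- For a perfectly calibrated model, `π₀ s̄₀ = π₁ (1 - s̄₁)`. -/
theorem perfectly_calibrated_mean_identity
    (π0 π1 : ℝ) (hπ0 : 0 ≤ π0) (hπ1 : 0 ≤ π1) (hπ : π0 + π1 = 1)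
    (f0 f1 : ℝ → ℝ)
    (hf0 : ∀ s, 0 ≤ f0 s) (hf1 : ∀ s, 0 ≤ f1 s)
    (hf0int : IntervalIntegrable f0 volume 0 1)
    (hf1int : IntervalIntegrable f1 volume 0 1)
    (hf0norm : (∫ s in (0:ℝ)..1, f0 s) = 1)
    (hf1norm : (∫ s in (0:ℝ)..1, f1 s) = 1)
    (hcal : ∀ᵐ s ∂(volume.restrict (Set.Icc (0:ℝ) 1)),
        s * (π0 * f0 s + π1 * f1 s) = π1 * f1 s) :
    π0 * (∫ s in (0:ℝ)..1, s * f0 s) = π1 * (1 - ∫ s in (0:ℝ)..1, s * f1 s) := by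
  have hsf0 : IntervalIntegrable (fun s => s * f0 s) volume 0 1 :=
    hf0int.continuousOn_mul continuous_id.continuousOn
  have hsf1 : IntervalIntegrable (fun s => s * f1 s) volume 0 1 :=
    hf1int.continuousOn_mul continuous_id.continuousOn
  have hcal' : ∀ᵐ s ∂volume, s ∈ Set.Icc (0:ℝ) 1 →
      s * (π0 * f0 s + π1 * f1 s) = π1 * f1 s :=
    (ae_restrict_iff' measurableSet_Icc).mp hcal
  have hcong : (∫ s in (0:ℝ)..1, s * (π0 * f0 s + π1 * f1 s)) =
      ∫ s in (0:ℝ)..1, π1 * f1 s := by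
    apply intervalIntegral.integral_congr_ae
    filter_upwards [hcal'] with s hs hs'
    exact hs (Set.uIoc_of_le (by norm_num : (0:ℝ) ≤ 1) ▸ hs' |> fun h =>
      Set.Ioc_subset_Icc_self h)
  have hlin : (∫ s in (0:ℝ)..1, s * (π0 * f0 s + π1 * f1 s)) =
      π0 * (∫ s in (0:ℝ)..1, s * f0 s) + π1 * (∫ s in (0:ℝ)..1, s * f1 s) := by
    have : (∫ s in (0:ℝ)..1, (π0 * (s * f0 s) + π1 * (s * f1 s))) =
        π0 * (∫ s in (0:ℝ)..1, s * f0 s) + π1 * (∫ s in (0:ℝ)..1, s * f1 s) := by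
      rw [intervalIntegral.integral_add (hsf0.const_mul π0) (hsf1.const_mul π1),
        intervalIntegral.integral_const_mul, intervalIntegral.integral_const_mul]
    rw [← this]
    apply intervalIntegral.integral_congr
    intro s _
    ring
  have hr : (∫ s in (0:ℝ)..1, π1 * f1 s) = π1 := by
    rw [intervalIntegral.integral_const_mul, hf1norm, mul_one]
  rw [hlin, hr] at hcong
  linarith
end

section
/- If a model is perfectly calibrated then its Brier score satisfies BS = π₁(1 − s̄₁) = π₀ s̄₀ = MAE/2. -/
open MeasureTheory

/-- For a perfectly calibrated model, `BS = π₁(1 - s̄₁) = π₀ s̄₀ = MAE/2`. -/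
theorem perfectly_calibrated_brier
    (π0 π1 : ℝ) (hπ0 : 0 ≤ π0) (hπ1 : 0 ≤ π1) (hπ : π0 + π1 = 1)
    (f0 f1 : ℝ → ℝ)
    (hf0 : ∀ s, 0 ≤ f0 s) (hf1 : ∀ s, 0 ≤ f1 s)
    (hf0int : IntervalIntegrable f0 volume 0 1)
    (hf1int : IntervalIntegrable f1 volume 0 1)
    (hf0norm : (∫ s in (0:ℝ)..1, f0 s) = 1)
    (hf1norm : (∫ s in (0:ℝ)..1, f1 s) = 1)
    (hcal : ∀ᵐ s ∂(volume.restrict (Set.Icc (0:ℝ) 1)),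
        s * (π0 * f0 s + π1 * f1 s) = π1 * f1 s) :
    π0 * (∫ s in (0:ℝ)..1, s ^ 2 * f0 s) + π1 * (∫ s in (0:ℝ)..1, (1 - s) ^ 2 * f1 s)
        = π1 * (1 - ∫ s in (0:ℝ)..1, s * f1 s) ∧
    π0 * (∫ s in (0:ℝ)..1, s ^ 2 * f0 s) + π1 * (∫ s in (0:ℝ)..1, (1 - s) ^ 2 * f1 s)
        = π0 * (∫ s in (0:ℝ)..1, s * f0 s) ∧
    π0 * (∫ s in (0:ℝ)..1, s ^ 2 * f0 s) + π1 * (∫ s in (0:ℝ)..1, (1 - s) ^ 2 * f1 s)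
        = (π0 * (∫ s in (0:ℝ)..1, s * f0 s)
            + π1 * (1 - ∫ s in (0:ℝ)..1, s * f1 s)) / 2 := by
  have h01 : (0:ℝ) ≤ 1 := zero_le_one
  have int02 : IntervalIntegrable (fun s => s ^ 2 * f0 s) volume 0 1 :=
    hf0int.continuousOn_mul (by fun_prop)
  have int01 : IntervalIntegrable (fun s => s * f0 s) volume 0 1 :=
    hf0int.continuousOn_mul (by fun_prop)
  have int0m : IntervalIntegrable (fun s => s * (1 - s) * f0 s) volume 0 1 :=
    hf0int.continuousOn_mul (by fun_prop)
  have int12 : IntervalIntegrable (fun s => (1 - s) ^ 2 * f1 s) volume 0 1 :=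
    hf1int.continuousOn_mul (by fun_prop)
  have int11 : IntervalIntegrable (fun s => s * f1 s) volume 0 1 :=
    hf1int.continuousOn_mul (by fun_prop)
  have int1m : IntervalIntegrable (fun s => s * (1 - s) * f1 s) volume 0 1 :=
    hf1int.continuousOn_mul (by fun_prop)
  have hcal' : ∀ᵐ s ∂(volume.restrict (Set.Ioc (0:ℝ) 1)),
      s * (π0 * f0 s + π1 * f1 s) = π1 * f1 s :=
    ae_restrict_of_ae_restrict_of_subset Set.Ioc_subset_Icc_self hcal
  have hEa : π0 * (∫ s in (0:ℝ)..1, s ^ 2 * f0 s)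
      = π1 * (∫ s in (0:ℝ)..1, s * (1 - s) * f1 s) := by
    rw [intervalIntegral.integral_of_le h01, intervalIntegral.integral_of_le h01,
      ← integral_const_mul, ← integral_const_mul]
    refine integral_congr_ae ?_
    filter_upwards [hcal'] with s hs
    linear_combination s * hs
  have hEb : π1 * (∫ s in (0:ℝ)..1, (1 - s) ^ 2 * f1 s)
      = π0 * (∫ s in (0:ℝ)..1, s * (1 - s) * f0 s) := by
    rw [intervalIntegral.integral_of_le h01, intervalIntegral.integral_of_le h01,
      ← integral_const_mul, ← integral_const_mul]
    refine integral_congr_ae ?_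
    filter_upwards [hcal'] with s hs
    linear_combination (s - 1) * hs
  have sum0 : (∫ s in (0:ℝ)..1, s ^ 2 * f0 s) + (∫ s in (0:ℝ)..1, s * (1 - s) * f0 s)
      = ∫ s in (0:ℝ)..1, s * f0 s := by
    rw [← intervalIntegral.integral_add int02 int0m]
    apply intervalIntegral.integral_congr
    intro s _; ring
  have sum1 : (∫ s in (0:ℝ)..1, (1 - s) ^ 2 * f1 s) + (∫ s in (0:ℝ)..1, s * (1 - s) * f1 s)
      = ∫ s in (0:ℝ)..1, (1 - s) * f1 s := by
    rw [← intervalIntegral.integral_add int12 int1m]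
    apply intervalIntegral.integral_congr
    intro s _; ring
  have sub1 : (∫ s in (0:ℝ)..1, (1 - s) * f1 s) = 1 - ∫ s in (0:ℝ)..1, s * f1 s := by
    have h : (∫ s in (0:ℝ)..1, (1 - s) * f1 s)
        = (∫ s in (0:ℝ)..1, f1 s) - ∫ s in (0:ℝ)..1, s * f1 s := by
      rw [← intervalIntegral.integral_sub hf1int int11]
      apply intervalIntegral.integral_congr
      intro s _; ring
    rw [h, hf1norm]
  have e1 : π0 * (∫ s in (0:ℝ)..1, s ^ 2 * f0 s) + π1 * (∫ s in (0:ℝ)..1, (1 - s) ^ 2 * f1 s)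
      = π1 * (1 - ∫ s in (0:ℝ)..1, s * f1 s) := by
    linear_combination hEa + π1 * sum1 + π1 * sub1
  have e2 : π0 * (∫ s in (0:ℝ)..1, s ^ 2 * f0 s) + π1 * (∫ s in (0:ℝ)..1, (1 - s) ^ 2 * f1 s)
      = π0 * (∫ s in (0:ℝ)..1, s * f0 s) := by
    linear_combination hEb + π0 * sum0
  exact ⟨e1, e2, by linarith⟩
end

section
/- If the score distribution is evenly-spaced in the sense that R(t) = t for all t ∈ [0,1] (where R(t) = π₀F₀(t)+π₁F₁(t)), then the Brier score equals π₀π₁(1 − 2·AUC) + 1/3. -/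
open MeasureTheory

lemma ibp_core (f g : ℝ → ℝ) {b : ℝ} (hb : 0 ≤ b)
    (hf : IntervalIntegrable f volume 0 b) (hg : IntervalIntegrable g volume 0 b) :
    (∫ s in (0:ℝ)..b, (∫ u in (0:ℝ)..s, f u) * g s)
      + (∫ s in (0:ℝ)..b, (∫ u in (0:ℝ)..s, g u) * f s)
      = (∫ u in (0:ℝ)..b, f u) * (∫ u in (0:ℝ)..b, g u) := by
  set I : Set ℝ := Set.Ioc (0:ℝ) b with hIdef
  have hImeas : MeasurableSet I := measurableSet_Ioc
  set μ := volume.restrict I with hμ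
  have hf' : Integrable f μ := hf.1
  have hg' : Integrable g μ := hg.1
  set T : Set (ℝ × ℝ) := {p | p.1 ≤ p.2} with hTdef
  set T' : Set (ℝ × ℝ) := {p | p.1 < p.2} with hT'def
  have hTm : MeasurableSet T := measurableSet_le measurable_fst measurable_snd
  have hT'm : MeasurableSet T' := measurableSet_lt measurable_fst measurable_snd
  set H : ℝ × ℝ → ℝ := T.indicator (fun p => f p.1 * g p.2) with hHdef
  set H' : ℝ × ℝ → ℝ := T'.indicator (fun p => g p.1 * f p.2) with hH'def
  have hHint : Integrable H (μ.prod μ) := (hf'.mul_prod hg').indicator hTm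
  have hH'int : Integrable H' (μ.prod μ) := (hg'.mul_prod hf').indicator hT'm
  -- first integral
  have key1 : (∫ s in (0:ℝ)..b, (∫ u in (0:ℝ)..s, f u) * g s)
      = ∫ s, (∫ u, H (u, s) ∂μ) ∂μ := by
    rw [intervalIntegral.integral_of_le hb]
    refine setIntegral_congr_fun hImeas (fun s hs => ?_)
    have hs0 : (0:ℝ) < s := hs.1
    have inner : ∫ u, H (u, s) ∂μ = (∫ u in (0:ℝ)..s, f u) * g s := by
      calc ∫ u, H (u, s) ∂μ
          = ∫ u in I, (Set.Ioc (0:ℝ) s).indicator (fun u => f u * g s) u := by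
            refine setIntegral_congr_fun hImeas (fun u hu => ?_)
            rw [hHdef]
            by_cases h : u ≤ s
            · rw [Set.indicator_of_mem (by exact h : (u, s) ∈ T),
                Set.indicator_of_mem (Set.mem_Ioc.2 ⟨hu.1, h⟩)]
            · rw [Set.indicator_of_notMem (by exact h : (u, s) ∉ T),
                Set.indicator_of_notMem (by simp [Set.mem_Ioc, h])]
        _ = ∫ u in I ∩ Set.Ioc (0:ℝ) s, f u * g s := setIntegral_indicator measurableSet_Ioc
        _ = ∫ u in Set.Ioc (0:ℝ) s, f u * g s := by
            rw [Set.inter_eq_self_of_subset_right (Set.Ioc_subset_Ioc_right hs.2)]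
        _ = (∫ u in Set.Ioc (0:ℝ) s, f u) * g s := integral_mul_const _ _
        _ = (∫ u in (0:ℝ)..s, f u) * g s := by rw [intervalIntegral.integral_of_le hs0.le]
    rw [inner]
  -- second integral
  have key2 : (∫ s in (0:ℝ)..b, (∫ u in (0:ℝ)..s, g u) * f s)
      = ∫ s, (∫ u, H' (u, s) ∂μ) ∂μ := by
    rw [intervalIntegral.integral_of_le hb]
    refine setIntegral_congr_fun hImeas (fun s hs => ?_)
    have hs0 : (0:ℝ) < s := hs.1
    have inner : ∫ u, H' (u, s) ∂μ = (∫ u in (0:ℝ)..s, g u) * f s := by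
      calc ∫ u, H' (u, s) ∂μ
          = ∫ u in I, (Set.Ioo (0:ℝ) s).indicator (fun u => g u * f s) u := by
            refine setIntegral_congr_fun hImeas (fun u hu => ?_)
            rw [hH'def]
            by_cases h : u < s
            · rw [Set.indicator_of_mem (by exact h : (u, s) ∈ T'),
                Set.indicator_of_mem (Set.mem_Ioo.2 ⟨hu.1, h⟩)]
            · rw [Set.indicator_of_notMem (by exact h : (u, s) ∉ T'),
                Set.indicator_of_notMem (by simp [Set.mem_Ioo, h])]
        _ = ∫ u in I ∩ Set.Ioo (0:ℝ) s, g u * f s := setIntegral_indicator measurableSet_Ioo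
        _ = ∫ u in Set.Ioo (0:ℝ) s, g u * f s := by
            rw [Set.inter_eq_self_of_subset_right
              (Set.Ioo_subset_Ioc_self.trans (Set.Ioc_subset_Ioc_right hs.2))]
        _ = ∫ u in Set.Ioc (0:ℝ) s, g u * f s := by
            rw [← integral_Ioc_eq_integral_Ioo]
        _ = (∫ u in Set.Ioc (0:ℝ) s, g u) * f s := integral_mul_const _ _
        _ = (∫ u in (0:ℝ)..s, g u) * f s := by rw [intervalIntegral.integral_of_le hs0.le]
    rw [inner]
  -- swap the second
  have key2' : (∫ s, (∫ u, H' (u, s) ∂μ) ∂μ) = ∫ s, (∫ u, H' (s, u) ∂μ) ∂μ := by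
    have := integral_integral_swap (f := fun s u => H' (u, s)) (μ := μ) (ν := μ)
      (by
        have : Function.uncurry (fun s u => H' (u, s)) = H' ∘ Prod.swap := rfl
        rw [this]
        exact hH'int.swap)
    exact this
  rw [key1, key2, key2']
  have hout1 : Integrable (fun s => ∫ u, H (u, s) ∂μ) μ := by
    have := hHint.swap.integral_prod_left
    exact this
  have hout2 : Integrable (fun s => ∫ u, H' (s, u) ∂μ) μ := hH'int.integral_prod_left
  rw [← integral_add hout1 hout2]
  have hae1 : ∀ᵐ s ∂μ, Integrable (fun u => H (u, s)) μ := hHint.prod_left_ae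
  have hae2 : ∀ᵐ s ∂μ, Integrable (fun u => H' (s, u)) μ := hH'int.prod_right_ae
  have hmain : ∀ᵐ s ∂μ, (∫ u, H (u, s) ∂μ) + (∫ u, H' (s, u) ∂μ)
      = (∫ u, f u ∂μ) * g s := by
    filter_upwards [hae1, hae2] with s h1 h2
    rw [← integral_add h1 h2]
    have hpt : ∀ u, H (u, s) + H' (s, u) = f u * g s := by
      intro u
      rw [hHdef, hH'def]
      by_cases h : u ≤ s
      · rw [Set.indicator_of_mem (by exact h : (u, s) ∈ T),
          Set.indicator_of_notMem (by exact not_lt.2 h : (s, u) ∉ T')]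
        ring
      · rw [Set.indicator_of_notMem (by exact h : (u, s) ∉ T),
          Set.indicator_of_mem (by exact lt_of_not_ge h : (s, u) ∈ T')]
        ring
    simp_rw [hpt]
    exact integral_mul_const _ _
  rw [integral_congr_ae hmain, integral_const_mul,
    intervalIntegral.integral_of_le hb, intervalIntegral.integral_of_le hb]
lemma ibp_applied (φ ψ Φ Ψ : ℝ → ℝ) {b : ℝ} (hb : 0 ≤ b) (hb1 : b ≤ 1)
    (hφ : IntervalIntegrable φ volume 0 1) (hψ : IntervalIntegrable ψ volume 0 1)
    (hΦ : ∀ s ∈ Set.Icc (0:ℝ) 1, Φ s = ∫ u in (0:ℝ)..s, φ u)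
    (hΨ : ∀ s ∈ Set.Icc (0:ℝ) 1, Ψ s = ∫ u in (0:ℝ)..s, ψ u) :
    (∫ s in (0:ℝ)..b, Φ s * ψ s) + (∫ s in (0:ℝ)..b, Ψ s * φ s) = Φ b * Ψ b := by
  have hsub : Set.uIcc (0:ℝ) b ⊆ Set.uIcc (0:ℝ) 1 := by
    rw [Set.uIcc_of_le hb, Set.uIcc_of_le zero_le_one]
    exact Set.Icc_subset_Icc le_rfl hb1
  have hmem : ∀ s ∈ Set.uIcc (0:ℝ) b, s ∈ Set.Icc (0:ℝ) 1 := fun s hs => by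
    have := hsub hs; rwa [Set.uIcc_of_le zero_le_one] at this
  have hφ' := hφ.mono_set hsub
  have hψ' := hψ.mono_set hsub
  have e1 : (∫ s in (0:ℝ)..b, Φ s * ψ s)
      = ∫ s in (0:ℝ)..b, (∫ u in (0:ℝ)..s, φ u) * ψ s :=
    intervalIntegral.integral_congr (fun s hs => by rw [hΦ s (hmem s hs)])
  have e2 : (∫ s in (0:ℝ)..b, Ψ s * φ s)
      = ∫ s in (0:ℝ)..b, (∫ u in (0:ℝ)..s, ψ u) * φ s :=
    intervalIntegral.integral_congr (fun s hs => by rw [hΨ s (hmem s hs)])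
  rw [e1, e2, ibp_core φ ψ hb hφ' hψ',
    ← hΦ b (Set.mem_Icc.2 ⟨hb, hb1⟩), ← hΨ b (Set.mem_Icc.2 ⟨hb, hb1⟩)]


/-- If scores are evenly-spaced (`R(t) = t` on `[0,1]`), the Brier score equals
    `π₀π₁(1 - 2 AUC) + 1/3`. -/
theorem evenly_spaced_brier_eq_auc
    (π0 π1 : ℝ) (hπ0 : 0 ≤ π0) (hπ1 : 0 ≤ π1) (hπ : π0 + π1 = 1)
    (f0 f1 F0 F1 : ℝ → ℝ)
    (hf0 : ∀ s, 0 ≤ f0 s) (hf1 : ∀ s, 0 ≤ f1 s)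
    (hF0 : ∀ t, F0 t = ∫ s in (0:ℝ)..t, f0 s)
    (hF1 : ∀ t, F1 t = ∫ s in (0:ℝ)..t, f1 s)
    (hf0int : IntervalIntegrable f0 volume 0 1)
    (hf1int : IntervalIntegrable f1 volume 0 1)
    (hF00 : F0 0 = 0) (hF10 : F1 0 = 0) (hF01 : F0 1 = 1) (hF11 : F1 1 = 1)
    (hR : ∀ t ∈ Set.Icc (0:ℝ) 1, π0 * F0 t + π1 * F1 t = t) :
    π0 * (∫ s in (0:ℝ)..1, s ^ 2 * f0 s) + π1 * (∫ s in (0:ℝ)..1, (1 - s) ^ 2 * f1 s)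
      = π0 * π1 * (1 - 2 * ∫ s in (0:ℝ)..1, F0 s * f1 s) + 1 / 3 := by
  have h01 : (0:ℝ) ≤ 1 := zero_le_one
  have hIcc : Set.uIcc (0:ℝ) 1 = Set.Icc (0:ℝ) 1 := Set.uIcc_of_le h01
  -- continuity of primitives
  have hcF0 : ContinuousOn F0 (Set.uIcc (0:ℝ) 1) := by
    have h := intervalIntegral.continuousOn_primitive_interval' hf0int Set.left_mem_uIcc
    have hfun : F0 = fun t => ∫ u in (0:ℝ)..t, f0 u := funext hF0
    rw [hfun]; exact h
  have hcF1 : ContinuousOn F1 (Set.uIcc (0:ℝ) 1) := by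
    have h := intervalIntegral.continuousOn_primitive_interval' hf1int Set.left_mem_uIcc
    have hfun : F1 = fun t => ∫ u in (0:ℝ)..t, f1 u := funext hF1
    rw [hfun]; exact h
  -- integrability of products
  have c00 : ContinuousOn (fun s => F0 s ^ 2) (Set.uIcc (0:ℝ) 1) := hcF0.pow 2
  have c11 : ContinuousOn (fun s => F1 s ^ 2) (Set.uIcc (0:ℝ) 1) := hcF1.pow 2
  have c01 : ContinuousOn (fun s => F0 s * F1 s) (Set.uIcc (0:ℝ) 1) := hcF0.mul hcF1
  have i00 : IntervalIntegrable (fun s => F0 s * f0 s) volume 0 1 :=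
    hf0int.continuousOn_mul hcF0
  have i10 : IntervalIntegrable (fun s => F1 s * f0 s) volume 0 1 :=
    hf0int.continuousOn_mul hcF1
  have i01 : IntervalIntegrable (fun s => F0 s * f1 s) volume 0 1 :=
    hf1int.continuousOn_mul hcF0
  have i11 : IntervalIntegrable (fun s => F1 s * f1 s) volume 0 1 :=
    hf1int.continuousOn_mul hcF1
  have i000 : IntervalIntegrable (fun s => F0 s ^ 2 * f0 s) volume 0 1 :=
    hf0int.continuousOn_mul c00
  have i001 : IntervalIntegrable (fun s => F0 s ^ 2 * f1 s) volume 0 1 :=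
    hf1int.continuousOn_mul c00
  have i110 : IntervalIntegrable (fun s => F1 s ^ 2 * f0 s) volume 0 1 :=
    hf0int.continuousOn_mul c11
  have i111 : IntervalIntegrable (fun s => F1 s ^ 2 * f1 s) volume 0 1 :=
    hf1int.continuousOn_mul c11
  have i010 : IntervalIntegrable (fun s => F0 s * F1 s * f0 s) volume 0 1 :=
    hf0int.continuousOn_mul c01
  have i011 : IntervalIntegrable (fun s => F0 s * F1 s * f1 s) volume 0 1 :=
    hf1int.continuousOn_mul c01
  have h2f0 : IntervalIntegrable (fun u => 2 * (F0 u * f0 u)) volume 0 1 := i00.const_mul 2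
  have h2f1 : IntervalIntegrable (fun u => 2 * (F1 u * f1 u)) volume 0 1 := i11.const_mul 2
  -- primitives of squares
  have P0 : ∀ s ∈ Set.Icc (0:ℝ) 1, (∫ u in (0:ℝ)..s, F0 u * f0 u) = F0 s ^ 2 / 2 := by
    intro s hs
    have h := ibp_applied f0 f0 F0 F0 hs.1 hs.2 hf0int hf0int
      (fun t _ => hF0 t) (fun t _ => hF0 t)
    rw [sq]; linarith
  have P1 : ∀ s ∈ Set.Icc (0:ℝ) 1, (∫ u in (0:ℝ)..s, F1 u * f1 u) = F1 s ^ 2 / 2 := by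
    intro s hs
    have h := ibp_applied f1 f1 F1 F1 hs.1 hs.2 hf1int hf1int
      (fun t _ => hF1 t) (fun t _ => hF1 t)
    rw [sq]; linarith
  have hΦ0sq : ∀ s ∈ Set.Icc (0:ℝ) 1,
      (fun t => F0 t ^ 2) s = ∫ u in (0:ℝ)..s, 2 * (F0 u * f0 u) := by
    intro s hs
    rw [intervalIntegral.integral_const_mul, P0 s hs]; ring
  have hΦ1sq : ∀ s ∈ Set.Icc (0:ℝ) 1,
      (fun t => F1 t ^ 2) s = ∫ u in (0:ℝ)..s, 2 * (F1 u * f1 u) := by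
    intro s hs
    rw [intervalIntegral.integral_const_mul, P1 s hs]; ring
  -- abbreviations
  set A := ∫ s in (0:ℝ)..1, F0 s * f1 s with hA
  set B := ∫ s in (0:ℝ)..1, F0 s * F1 s * f0 s with hB
  set C := ∫ s in (0:ℝ)..1, F0 s * F1 s * f1 s with hC
  -- identities
  have vf1 : (∫ s in (0:ℝ)..1, f1 s) = 1 := by rw [← hF1 1]; exact hF11
  have vF1f0 : (∫ s in (0:ℝ)..1, F1 s * f0 s) = 1 - A := by
    have h := ibp_applied f0 f1 F0 F1 h01 le_rfl hf0int hf1int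
      (fun t _ => hF0 t) (fun t _ => hF1 t)
    rw [hF01, hF11] at h; linarith
  have vF0f0 : (∫ s in (0:ℝ)..1, F0 s * f0 s) = 1 / 2 := by
    have h := P0 1 ⟨h01, le_rfl⟩; rw [hF01] at h; norm_num at h; exact h
  have vF1f1 : (∫ s in (0:ℝ)..1, F1 s * f1 s) = 1 / 2 := by
    have h := P1 1 ⟨h01, le_rfl⟩; rw [hF11] at h; norm_num at h; exact h
  -- triple product identities
  have rear0 : (∫ s in (0:ℝ)..1, F0 s * (2 * (F0 s * f0 s)))
      = 2 * ∫ s in (0:ℝ)..1, F0 s ^ 2 * f0 s := by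
    rw [← intervalIntegral.integral_const_mul]
    exact intervalIntegral.integral_congr (fun s _ => by ring)
  have rear1 : (∫ s in (0:ℝ)..1, F1 s * (2 * (F1 s * f1 s)))
      = 2 * ∫ s in (0:ℝ)..1, F1 s ^ 2 * f1 s := by
    rw [← intervalIntegral.integral_const_mul]
    exact intervalIntegral.integral_congr (fun s _ => by ring)
  have rear2 : (∫ s in (0:ℝ)..1, F1 s * (2 * (F0 s * f0 s))) = 2 * B := by
    rw [hB, ← intervalIntegral.integral_const_mul]
    exact intervalIntegral.integral_congr (fun s _ => by ring)
  have rear3 : (∫ s in (0:ℝ)..1, F0 s * (2 * (F1 s * f1 s))) = 2 * C := by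
    rw [hC, ← intervalIntegral.integral_const_mul]
    exact intervalIntegral.integral_congr (fun s _ => by ring)
  have T0 : (∫ s in (0:ℝ)..1, F0 s ^ 2 * f0 s) = 1 / 3 := by
    have h : (∫ s in (0:ℝ)..1, F0 s ^ 2 * f0 s)
        + (∫ s in (0:ℝ)..1, F0 s * (2 * (F0 s * f0 s))) = F0 1 ^ 2 * F0 1 :=
      ibp_applied (fun u => 2 * (F0 u * f0 u)) f0 (fun t => F0 t ^ 2) F0 h01 le_rfl
        h2f0 hf0int hΦ0sq (fun t _ => hF0 t)
    rw [rear0, hF01] at h; norm_num at h; linarith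
  have T1 : (∫ s in (0:ℝ)..1, F1 s ^ 2 * f1 s) = 1 / 3 := by
    have h : (∫ s in (0:ℝ)..1, F1 s ^ 2 * f1 s)
        + (∫ s in (0:ℝ)..1, F1 s * (2 * (F1 s * f1 s))) = F1 1 ^ 2 * F1 1 :=
      ibp_applied (fun u => 2 * (F1 u * f1 u)) f1 (fun t => F1 t ^ 2) F1 h01 le_rfl
        h2f1 hf1int hΦ1sq (fun t _ => hF1 t)
    rw [rear1, hF11] at h; norm_num at h; linarith
  have S5 : (∫ s in (0:ℝ)..1, F0 s ^ 2 * f1 s) = 1 - 2 * B := by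
    have h : (∫ s in (0:ℝ)..1, F0 s ^ 2 * f1 s)
        + (∫ s in (0:ℝ)..1, F1 s * (2 * (F0 s * f0 s))) = F0 1 ^ 2 * F1 1 :=
      ibp_applied (fun u => 2 * (F0 u * f0 u)) f1 (fun t => F0 t ^ 2) F1 h01 le_rfl
        h2f0 hf1int hΦ0sq (fun t _ => hF1 t)
    rw [rear2, hF01, hF11] at h; norm_num at h; linarith
  have S6 : (∫ s in (0:ℝ)..1, F1 s ^ 2 * f0 s) = 1 - 2 * C := by
    have h : (∫ s in (0:ℝ)..1, F1 s ^ 2 * f0 s)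
        + (∫ s in (0:ℝ)..1, F0 s * (2 * (F1 s * f1 s))) = F1 1 ^ 2 * F0 1 :=
      ibp_applied (fun u => 2 * (F1 u * f1 u)) f0 (fun t => F1 t ^ 2) F0 h01 le_rfl
        h2f1 hf0int hΦ1sq (fun t _ => hF0 t)
    rw [rear3, hF01, hF11] at h; norm_num at h; linarith
  -- expansions of the Brier integrals
  have E0 : (∫ s in (0:ℝ)..1, s ^ 2 * f0 s)
      = π0 ^ 2 * (∫ s in (0:ℝ)..1, F0 s ^ 2 * f0 s)
        + 2 * π0 * π1 * B
        + π1 ^ 2 * (∫ s in (0:ℝ)..1, F1 s ^ 2 * f0 s) := by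
    have congr1 : (∫ s in (0:ℝ)..1, s ^ 2 * f0 s)
        = ∫ s in (0:ℝ)..1, (π0 ^ 2 * (F0 s ^ 2 * f0 s)
            + 2 * π0 * π1 * (F0 s * F1 s * f0 s)
            + π1 ^ 2 * (F1 s ^ 2 * f0 s)) :=
      intervalIntegral.integral_congr (fun s hs => by
        have hRs := hR s (hIcc ▸ hs)
        calc s ^ 2 * f0 s = (π0 * F0 s + π1 * F1 s) ^ 2 * f0 s := by rw [hRs]
          _ = _ := by ring)
    rw [congr1,
      intervalIntegral.integral_add ((i000.const_mul _).add (i010.const_mul _))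
        (i110.const_mul _),
      intervalIntegral.integral_add (i000.const_mul _) (i010.const_mul _),
      intervalIntegral.integral_const_mul, intervalIntegral.integral_const_mul,
      intervalIntegral.integral_const_mul]
  have E1 : (∫ s in (0:ℝ)..1, (1 - s) ^ 2 * f1 s)
      = (∫ s in (0:ℝ)..1, f1 s)
        + (-(2 * π0)) * A
        + (-(2 * π1)) * (∫ s in (0:ℝ)..1, F1 s * f1 s)
        + π0 ^ 2 * (∫ s in (0:ℝ)..1, F0 s ^ 2 * f1 s)
        + 2 * π0 * π1 * C
        + π1 ^ 2 * (∫ s in (0:ℝ)..1, F1 s ^ 2 * f1 s) := by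
    have congr1 : (∫ s in (0:ℝ)..1, (1 - s) ^ 2 * f1 s)
        = ∫ s in (0:ℝ)..1, (f1 s
            + (-(2 * π0)) * (F0 s * f1 s)
            + (-(2 * π1)) * (F1 s * f1 s)
            + π0 ^ 2 * (F0 s ^ 2 * f1 s)
            + 2 * π0 * π1 * (F0 s * F1 s * f1 s)
            + π1 ^ 2 * (F1 s ^ 2 * f1 s)) :=
      intervalIntegral.integral_congr (fun s hs => by
        have hRs := hR s (hIcc ▸ hs)
        calc (1 - s) ^ 2 * f1 s
            = (1 - (π0 * F0 s + π1 * F1 s)) ^ 2 * f1 s := by rw [hRs]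
          _ = _ := by ring)
    rw [congr1,
      intervalIntegral.integral_add
        ((((hf1int.add (i01.const_mul _)).add (i11.const_mul _)).add
          (i001.const_mul _)).add (i011.const_mul _)) (i111.const_mul _),
      intervalIntegral.integral_add
        (((hf1int.add (i01.const_mul _)).add (i11.const_mul _)).add
          (i001.const_mul _)) (i011.const_mul _),
      intervalIntegral.integral_add
        ((hf1int.add (i01.const_mul _)).add (i11.const_mul _)) (i001.const_mul _),
      intervalIntegral.integral_add (hf1int.add (i01.const_mul _)) (i11.const_mul _),
      intervalIntegral.integral_add hf1int (i01.const_mul _),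
      intervalIntegral.integral_const_mul, intervalIntegral.integral_const_mul,
      intervalIntegral.integral_const_mul, intervalIntegral.integral_const_mul,
      intervalIntegral.integral_const_mul]
  rw [E0, E1, T0, T1, S5, S6, vF1f1, vf1]
  have hπ1' : π1 = 1 - π0 := by linarith
  rw [hπ1']; ring
end

section
/- If scores are evenly-spaced (R(t) = t on [0,1]) then the mean absolute error equals π₀π₁(1 − 2·AUC) + 1/2. -/
open MeasureTheory Set

private lemma swap_key (g h : ℝ → ℝ) (hg : ∀ s, 0 ≤ g s) (hh : ∀ s, 0 ≤ h s)
    (hgi : IntervalIntegrable g volume 0 1) (hhi : IntervalIntegrable h volume 0 1) :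
    ∫ s in (0:ℝ)..1, (∫ t in (0:ℝ)..s, g t) * h s
      = ∫ t in (0:ℝ)..1, g t * ((∫ u in (0:ℝ)..1, h u) - ∫ u in (0:ℝ)..t, h u) := by
  have hgI : IntegrableOn g (Ioc (0:ℝ) 1) volume :=
    (intervalIntegrable_iff_integrableOn_Ioc_of_le zero_le_one).mp hgi
  have hhI : IntegrableOn h (Ioc (0:ℝ) 1) volume :=
    (intervalIntegrable_iff_integrableOn_Ioc_of_le zero_le_one).mp hhi
  set μ := volume.restrict (Ioc (0:ℝ) 1) with hμ
  set K : ℝ × ℝ → ℝ := fun p => if p.2 ≤ p.1 then g p.2 * h p.1 else 0 with hK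
  have hKind : K = Set.indicator {p : ℝ × ℝ | p.2 ≤ p.1} (fun p => g p.2 * h p.1) := by
    funext p; by_cases hp : p.2 ≤ p.1 <;> simp [hK, Set.indicator, hp]
  have hmeas : MeasurableSet {p : ℝ × ℝ | p.2 ≤ p.1} :=
    (isClosed_le continuous_snd continuous_fst).measurableSet
  have hKint : Integrable K (μ.prod μ) := by
    have hbase : Integrable (fun p : ℝ × ℝ => h p.1 * g p.2) (μ.prod μ) := hhI.mul_prod hgI
    have hbase' : Integrable (fun p : ℝ × ℝ => g p.2 * h p.1) (μ.prod μ) := by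
      simpa [mul_comm] using hbase
    rw [hKind]
    exact hbase'.indicator hmeas
  have hL : ∫ s in (0:ℝ)..1, (∫ t in (0:ℝ)..s, g t) * h s = ∫ s, (∫ t, K (s, t) ∂μ) ∂μ := by
    rw [intervalIntegral.integral_of_le zero_le_one]
    apply setIntegral_congr_fun measurableSet_Ioc
    intro s hs
    have h1 : (fun t => K (s, t)) = Set.indicator (Iic s) (fun t => g t * h s) := by
      funext t; by_cases ht : t ≤ s <;> simp [hK, Set.indicator, ht]
    have h2 : Iic s ∩ Ioc 0 1 = Ioc 0 s := by
      ext x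
      simp only [mem_inter_iff, mem_Iic, mem_Ioc]
      exact ⟨fun ⟨a, b, _⟩ => ⟨b, a⟩, fun ⟨b, a⟩ => ⟨a, b, a.trans hs.2⟩⟩
    show (∫ t in (0:ℝ)..s, g t) * h s = ∫ t, K (s, t) ∂μ
    symm
    rw [h1, integral_indicator measurableSet_Iic, hμ,
      Measure.restrict_restrict measurableSet_Iic, h2, integral_mul_const,
      ← intervalIntegral.integral_of_le hs.1.le]
  have hRside : ∫ t, (∫ s, K (s, t) ∂μ) ∂μ
      = ∫ t in (0:ℝ)..1, g t * ((∫ u in (0:ℝ)..1, h u) - ∫ u in (0:ℝ)..t, h u) := by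
    rw [intervalIntegral.integral_of_le zero_le_one]
    apply setIntegral_congr_fun measurableSet_Ioc
    intro t ht
    have h1 : (fun s => K (s, t)) = Set.indicator (Ici t) (fun s => g t * h s) := by
      funext s; by_cases hts : t ≤ s <;> simp [hK, Set.indicator, hts]
    have h2 : Ici t ∩ Ioc 0 1 = Icc t 1 := by
      ext x
      simp only [mem_inter_iff, mem_Ici, mem_Ioc, mem_Icc]
      exact ⟨fun ⟨a, _, c⟩ => ⟨a, c⟩, fun ⟨a, c⟩ => ⟨a, ht.1.trans_le a, c⟩⟩
    show (∫ s, K (s, t) ∂μ) = g t * ((∫ u in (0:ℝ)..1, h u) - ∫ u in (0:ℝ)..t, h u)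
    rw [h1, integral_indicator measurableSet_Ici, hμ,
      Measure.restrict_restrict measurableSet_Ici, h2, integral_Icc_eq_integral_Ioc,
      integral_const_mul]
    congr 1
    rw [← intervalIntegral.integral_of_le ht.2]
    have i1 : IntervalIntegrable h volume 0 t :=
      hhi.mono_set (uIcc_subset_uIcc left_mem_uIcc (by
        rw [uIcc_of_le zero_le_one]; exact ⟨ht.1.le, ht.2⟩))
    have i2 : IntervalIntegrable h volume t 1 :=
      hhi.mono_set (uIcc_subset_uIcc (by
        rw [uIcc_of_le zero_le_one]; exact ⟨ht.1.le, ht.2⟩) right_mem_uIcc)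
    have hadj := intervalIntegral.integral_add_adjacent_intervals i1 i2
    linarith
  have hswap : ∫ s, (∫ t, K (s, t) ∂μ) ∂μ = ∫ t, (∫ s, K (s, t) ∂μ) ∂μ :=
    integral_integral_swap hKint
  rw [hL, hswap, hRside]

/-- If scores are evenly-spaced (`R(t) = t` on `[0,1]`), the mean absolute error equals
    `π₀π₁(1 - 2 AUC) + 1/2`. -/
theorem evenly_spaced_mae_eq_auc
    (π0 π1 : ℝ) (hπ0 : 0 ≤ π0) (hπ1 : 0 ≤ π1) (hπ : π0 + π1 = 1)
    (f0 f1 F0 F1 : ℝ → ℝ)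
    (hf0 : ∀ s, 0 ≤ f0 s) (hf1 : ∀ s, 0 ≤ f1 s)
    (hF0 : ∀ t, F0 t = ∫ s in (0:ℝ)..t, f0 s)
    (hF1 : ∀ t, F1 t = ∫ s in (0:ℝ)..t, f1 s)
    (hf0int : IntervalIntegrable f0 volume 0 1)
    (hf1int : IntervalIntegrable f1 volume 0 1)
    (hF00 : F0 0 = 0) (hF10 : F1 0 = 0) (hF01 : F0 1 = 1) (hF11 : F1 1 = 1)
    (hR : ∀ t ∈ Set.Icc (0:ℝ) 1, π0 * F0 t + π1 * F1 t = t) :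
    π0 * (∫ s in (0:ℝ)..1, s * f0 s) + π1 * (∫ s in (0:ℝ)..1, (1 - s) * f1 s)
      = π0 * π1 * (1 - 2 * ∫ s in (0:ℝ)..1, F0 s * f1 s) + 1 / 2 := by
  -- total masses
  have hg1 : (∫ s in (0:ℝ)..1, f0 s) = 1 := (hF0 1).symm.trans hF01
  have hh1 : (∫ s in (0:ℝ)..1, f1 s) = 1 := (hF1 1).symm.trans hF11
  -- continuity of the cdfs
  have cF0 : ContinuousOn F0 (uIcc (0:ℝ) 1) := by
    have := intervalIntegral.continuousOn_primitive_interval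
      (f := f0) (μ := volume) (a := (0:ℝ)) (b := (1:ℝ))
      (by rw [uIcc_of_le zero_le_one]
          exact (intervalIntegrable_iff_integrableOn_Icc_of_le zero_le_one).mp hf0int)
    have hfun : F0 = fun x => ∫ t in (0:ℝ)..x, f0 t := funext hF0
    rw [hfun]; exact this
  have cF1 : ContinuousOn F1 (uIcc (0:ℝ) 1) := by
    have := intervalIntegral.continuousOn_primitive_interval
      (f := f1) (μ := volume) (a := (0:ℝ)) (b := (1:ℝ))
      (by rw [uIcc_of_le zero_le_one]
          exact (intervalIntegrable_iff_integrableOn_Icc_of_le zero_le_one).mp hf1int)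
    have hfun : F1 = fun x => ∫ t in (0:ℝ)..x, f1 t := funext hF1
    rw [hfun]; exact this
  -- integrability of products
  have iF0f0 : IntervalIntegrable (fun s => F0 s * f0 s) volume 0 1 := hf0int.continuousOn_mul cF0
  have if0F0 : IntervalIntegrable (fun s => f0 s * F0 s) volume 0 1 := hf0int.mul_continuousOn cF0
  have iF1f0 : IntervalIntegrable (fun s => F1 s * f0 s) volume 0 1 := hf0int.continuousOn_mul cF1
  have if1F0 : IntervalIntegrable (fun s => f1 s * F0 s) volume 0 1 := hf1int.mul_continuousOn cF0
  have iF0f1 : IntervalIntegrable (fun s => F0 s * f1 s) volume 0 1 := hf1int.continuousOn_mul cF0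
  have iF1f1 : IntervalIntegrable (fun s => F1 s * f1 s) volume 0 1 := hf1int.continuousOn_mul cF1
  have if1F1 : IntervalIntegrable (fun s => f1 s * F1 s) volume 0 1 := hf1int.mul_continuousOn cF1
  have isf1 : IntervalIntegrable (fun s => s * f1 s) volume 0 1 :=
    hf1int.continuousOn_mul continuous_id.continuousOn
  -- ∫ F0 f0 = 1/2
  have C00 : (∫ s in (0:ℝ)..1, F0 s * f0 s) = 1 / 2 := by
    have k := swap_key f0 f0 hf0 hf0 hf0int hf0int
    simp_rw [← hF0, hF01] at k
    have split : (∫ t in (0:ℝ)..1, f0 t * (1 - F0 t))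
        = (∫ t in (0:ℝ)..1, f0 t) - ∫ t in (0:ℝ)..1, f0 t * F0 t := by
      rw [← intervalIntegral.integral_sub hf0int if0F0]
      apply intervalIntegral.integral_congr
      intro t _; ring
    have comm : (∫ t in (0:ℝ)..1, f0 t * F0 t) = ∫ t in (0:ℝ)..1, F0 t * f0 t := by
      simp_rw [mul_comm]
    rw [split, comm, hg1] at k
    linarith
  -- ∫ F1 f1 = 1/2
  have C11 : (∫ s in (0:ℝ)..1, F1 s * f1 s) = 1 / 2 := by
    have k := swap_key f1 f1 hf1 hf1 hf1int hf1int
    simp_rw [← hF1, hF11] at k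
    have split : (∫ t in (0:ℝ)..1, f1 t * (1 - F1 t))
        = (∫ t in (0:ℝ)..1, f1 t) - ∫ t in (0:ℝ)..1, f1 t * F1 t := by
      rw [← intervalIntegral.integral_sub hf1int if1F1]
      apply intervalIntegral.integral_congr
      intro t _; ring
    have comm : (∫ t in (0:ℝ)..1, f1 t * F1 t) = ∫ t in (0:ℝ)..1, F1 t * f1 t := by
      simp_rw [mul_comm]
    rw [split, comm, hh1] at k
    linarith
  -- ∫ F1 f0 = 1 - A
  have C10 : (∫ s in (0:ℝ)..1, F1 s * f0 s)
      = 1 - ∫ s in (0:ℝ)..1, F0 s * f1 s := by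
    have k := swap_key f1 f0 hf1 hf0 hf1int hf0int
    simp_rw [← hF1, ← hF0, hF01] at k
    have split : (∫ t in (0:ℝ)..1, f1 t * (1 - F0 t))
        = (∫ t in (0:ℝ)..1, f1 t) - ∫ t in (0:ℝ)..1, f1 t * F0 t := by
      rw [← intervalIntegral.integral_sub hf1int if1F0]
      apply intervalIntegral.integral_congr
      intro t _; ring
    have comm : (∫ t in (0:ℝ)..1, f1 t * F0 t) = ∫ t in (0:ℝ)..1, F0 t * f1 t := by
      simp_rw [mul_comm]
    rw [split, comm, hh1] at k
    linarith
  -- ∫ s f0 via the constraint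
  have X0 : (∫ s in (0:ℝ)..1, s * f0 s)
      = π0 * (1 / 2) + π1 * (1 - ∫ s in (0:ℝ)..1, F0 s * f1 s) := by
    have e : EqOn (fun s => s * f0 s)
        (fun s => π0 * (F0 s * f0 s) + π1 * (F1 s * f0 s)) (uIcc (0:ℝ) 1) := by
      intro s hs
      rw [uIcc_of_le zero_le_one] at hs
      have h := hR s hs
      simp only
      rw [show s * f0 s = (π0 * F0 s + π1 * F1 s) * f0 s by rw [h]]
      ring
    rw [intervalIntegral.integral_congr e,
      intervalIntegral.integral_add (iF0f0.const_mul π0) (iF1f0.const_mul π1),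
      intervalIntegral.integral_const_mul, intervalIntegral.integral_const_mul, C00, C10]
  -- ∫ s f1 via the constraint
  have X1 : (∫ s in (0:ℝ)..1, s * f1 s)
      = π0 * (∫ s in (0:ℝ)..1, F0 s * f1 s) + π1 * (1 / 2) := by
    have e : EqOn (fun s => s * f1 s)
        (fun s => π0 * (F0 s * f1 s) + π1 * (F1 s * f1 s)) (uIcc (0:ℝ) 1) := by
      intro s hs
      rw [uIcc_of_le zero_le_one] at hs
      have h := hR s hs
      simp only
      rw [show s * f1 s = (π0 * F0 s + π1 * F1 s) * f1 s by rw [h]]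
      ring
    rw [intervalIntegral.integral_congr e,
      intervalIntegral.integral_add (iF0f1.const_mul π0) (iF1f1.const_mul π1),
      intervalIntegral.integral_const_mul, intervalIntegral.integral_const_mul, C11]
  -- ∫ (1-s) f1
  have Y1 : (∫ s in (0:ℝ)..1, (1 - s) * f1 s)
      = 1 - (π0 * (∫ s in (0:ℝ)..1, F0 s * f1 s) + π1 * (1 / 2)) := by
    have step : (∫ s in (0:ℝ)..1, (1 - s) * f1 s)
        = (∫ s in (0:ℝ)..1, f1 s) - ∫ s in (0:ℝ)..1, s * f1 s := by
      rw [← intervalIntegral.integral_sub hf1int isf1]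
      apply intervalIntegral.integral_congr
      intro s _; ring
    rw [step, hh1, X1]
  rw [X0, Y1]
  linear_combination ((π0 - π1 + 1) / 2) * hπ
end
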